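/- arXiv:2301.08082 — 4 statements merged into one kernel-verified Lean document; each statement's English description precedes it below -/
import Mathlib

section
/- Let g be a derivator and x₀ ∈ ℝ. For every n ∈ ℕ and x ∈ ℝ: g_n(x) = g_1(x)^n − Σ_{k=1}^{n−1} g_1(x)^{n−1−k} Σ_{j=1}^{k} h_{j,k−j}(x), where h_{1,k}(x) = (k+1) ∫_{x₀}^{x} g_k Δg dμ_g and h_{j+1,k}(x) = (k+j+1) ∫_{x₀}^{x} h_{j,k} dμ_g. -/
open MeasureTheory Set Finset

/-- The jump of `g` at `x`: `Δg(x) = g(x⁺) − g(x)`. -/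
noncomputable def jumpOf (g : ℝ → ℝ) (x : ℝ) : ℝ := Function.rightLim g x - g x

/-- Oriented Lebesgue–Stieltjes integral: `∫_a^b f dμ = ∫_{[a,b)} f dμ` if `a ≤ b`,
`= −∫_{[b,a)} f dμ` otherwise. -/
noncomputable def ointeg (μ : MeasureTheory.Measure ℝ) (f : ℝ → ℝ) (a b : ℝ) : ℝ :=
  if a ≤ b then ∫ s in Set.Ico a b, f s ∂μ else - ∫ s in Set.Ico b a, f s ∂μ

/-- The `g`-monomials centered at `c`, defined from the Lebesgue–Stieltjes measure `μ` of `g`: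
`g_0 ≡ 1`, `g_{n+1}(x) = (n+1) ∫_c^x g_n dμ` (oriented). -/
noncomputable def gMon (μ : MeasureTheory.Measure ℝ) (c : ℝ) : ℕ → ℝ → ℝ
  | 0 => fun _ => 1
  | n + 1 => fun x => ((n : ℝ) + 1) * ointeg μ (gMon μ c n) c x


/-- The auxiliary iterated integrals: `hAux g μ x₀ (j−1) k` is `h_{j,k}` of the paper, i.e.
`h_{1,k}(x) = (k+1) ∫_{x₀}^x g_k Δg dμ_g` and `h_{j+1,k}(x) = (k+j+1) ∫_{x₀}^x h_{j,k} dμ_g`. -/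
noncomputable def hAux (g : ℝ → ℝ) (μ : MeasureTheory.Measure ℝ) (x₀ : ℝ) :
    ℕ → ℕ → ℝ → ℝ
  | 0, k => fun x => ((k : ℝ) + 1) * ointeg μ (fun s => gMon μ x₀ k s * jumpOf g s) x₀ x
  | j + 1, k => fun x => ((k : ℝ) + (j : ℝ) + 2) * ointeg μ (hAux g μ x₀ j k) x₀ x

namespace S13
variable {g : ℝ → ℝ} {μ : Measure ℝ} {f h : ℝ → ℝ}

/-- locally bounded measurable -/
def Loc (f : ℝ → ℝ) : Prop := Measurable f ∧ ∀ a b : ℝ, ∃ C, ∀ s ∈ Ico a b, |f s| ≤ C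

lemma loc_one : Loc (fun _ : ℝ => (1:ℝ)) := ⟨measurable_const, fun _ _ => ⟨1, by simp⟩⟩

lemma Loc.mul (hf : Loc f) (hh : Loc h) : Loc (fun s => f s * h s) := by
  refine ⟨hf.1.mul hh.1, fun a b => ?_⟩
  obtain ⟨C, hC⟩ := hf.2 a b; obtain ⟨D, hD⟩ := hh.2 a b
  refine ⟨C * D, fun s hs => ?_⟩
  rw [abs_mul]
  have h1 := hC s hs; have h2 := hD s hs
  exact mul_le_mul h1 h2 (abs_nonneg _) ((abs_nonneg _).trans h1)

lemma Loc.const_mul (hf : Loc f) (c : ℝ) : Loc (fun s => c * f s) := by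
  refine ⟨measurable_const.mul hf.1, fun a b => ?_⟩
  obtain ⟨C, hC⟩ := hf.2 a b
  exact ⟨|c| * C, fun s hs => by rw [abs_mul]; exact mul_le_mul_of_nonneg_left (hC s hs) (abs_nonneg _)⟩

lemma Loc.add (hf : Loc f) (hh : Loc h) : Loc (fun s => f s + h s) := by
  refine ⟨hf.1.add hh.1, fun a b => ?_⟩
  obtain ⟨C, hC⟩ := hf.2 a b; obtain ⟨D, hD⟩ := hh.2 a b
  exact ⟨C + D, fun s hs => (abs_add_le _ _).trans (add_le_add (hC s hs) (hD s hs))⟩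

lemma loc_jump (hg : Monotone g) : Loc (jumpOf g) := by
  constructor
  · exact (hg.rightLim.measurable).sub hg.measurable
  · intro a b
    refine ⟨g b - g a, fun s hs => ?_⟩
    have h0 : 0 ≤ jumpOf g s := sub_nonneg.2 (hg.le_rightLim le_rfl)
    rw [abs_of_nonneg h0]
    exact sub_le_sub (hg.rightLim_le hs.2) (hg hs.1)


section
variable (hμ : ∀ a b : ℝ, a ≤ b → μ (Set.Ico a b) = ENNReal.ofReal (g b - g a))
include hμ

lemma finIco (a b : ℝ) : μ (Ico a b) < ⊤ := by
  rcases le_or_gt a b with hab | hab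
  · rw [hμ a b hab]; exact ENNReal.ofReal_lt_top
  · rw [Set.Ico_eq_empty (not_lt.2 hab.le)]; simp

lemma finRestrict (a b : ℝ) : IsFiniteMeasure (μ.restrict (Ico a b)) :=
  ⟨by rw [Measure.restrict_apply_univ]; exact finIco hμ a b⟩

lemma Loc.integrableOn (hf : Loc f) (a b : ℝ) : IntegrableOn f (Ico a b) μ := by
  obtain ⟨C, hC⟩ := hf.2 a b
  haveI := finRestrict hμ a b
  refine Integrable.mono' (integrable_const C) (hf.1.aestronglyMeasurable) ?_
  exact (ae_restrict_iff' measurableSet_Ico).2 (Filter.Eventually.of_forall fun s hs => hC s hs)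

lemma splitInt (hf : Loc f) {a b c : ℝ} (h1 : a ≤ b) (h2 : b ≤ c) :
    ∫ s in Ico a c, f s ∂μ = (∫ s in Ico a b, f s ∂μ) + ∫ s in Ico b c, f s ∂μ := by
  rw [← Set.Ico_union_Ico_eq_Ico h1 h2]
  exact setIntegral_union (Set.Ico_disjoint_Ico_same) measurableSet_Ico
    (hf.integrableOn hμ a b) (hf.integrableOn hμ b c)

/-- Chasles relation. -/
lemma chasles (hf : Loc f) (c : ℝ) {a b : ℝ} (hab : a ≤ b) :
    ointeg μ f c b = ointeg μ f c a + ∫ s in Ico a b, f s ∂μ := by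
  unfold ointeg
  rcases le_or_gt c a with hca | hac
  · rw [if_pos hca, if_pos (hca.trans hab), splitInt hμ hf hca hab]
  · rcases le_or_gt c b with hcb | hbc
    · rw [if_pos hcb, if_neg (not_le.2 hac), splitInt hμ hf hac.le hcb]; ring
    · rw [if_neg (not_le.2 hbc), if_neg (not_le.2 hac),
        splitInt hμ hf hab hbc.le]; ring

lemma ointeg_eq (c : ℝ) {a : ℝ} (hca : c ≤ a) : ointeg μ f c a = ∫ s in Ico c a, f s ∂μ :=
  if_pos hca

lemma ointeg_eq_neg (c : ℝ) {a : ℝ} (hca : a < c) :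
    ointeg μ f c a = - ∫ s in Ico a c, f s ∂μ := if_neg (not_le.2 hca)

lemma Loc.ointeg (hf : Loc f) (c : ℝ) : Loc (fun x => _root_.ointeg μ f c x) := by
  constructor
  · -- measurable: difference of monotone functions
    have key : ∀ p : ℝ → ℝ, Loc p → (∀ s, 0 ≤ p s) → Monotone (fun x => _root_.ointeg μ p c x) := by
      intro p hp hp0 u v huv
      dsimp only
      rw [chasles hμ hp c huv]
      have : 0 ≤ ∫ s in Ico u v, p s ∂μ := setIntegral_nonneg measurableSet_Ico fun s _ => hp0 s
      linarith
    have hfp : Loc (fun s => max (f s) 0) := by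
      refine ⟨hf.1.max measurable_const, fun a b => ?_⟩
      obtain ⟨C, hC⟩ := hf.2 a b
      exact ⟨C, fun s hs => (abs_max_le_max_abs_abs ..).trans (by simpa using (hC s hs))⟩
    have hfm : Loc (fun s => max (-f s) 0) := by
      refine ⟨hf.1.neg.max measurable_const, fun a b => ?_⟩
      obtain ⟨C, hC⟩ := hf.2 a b
      exact ⟨C, fun s hs => (abs_max_le_max_abs_abs ..).trans
        (by simpa [abs_neg] using (hC s hs))⟩
    have hdecomp : ∀ x, _root_.ointeg μ f c x
        = _root_.ointeg μ (fun s => max (f s) 0) c x - _root_.ointeg μ (fun s => max (-f s) 0) c x := by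
      intro x
      have hint : ∀ a b : ℝ, (∫ s in Ico a b, f s ∂μ)
          = (∫ s in Ico a b, max (f s) 0 ∂μ) - ∫ s in Ico a b, max (-f s) 0 ∂μ := by
        intro a b
        rw [← integral_sub (hfp.integrableOn hμ a b) (hfm.integrableOn hμ a b)]
        congr 1; ext s; rcases le_total (f s) 0 with h | h <;> simp [max_eq_left, max_eq_right, h] <;> linarith
      unfold _root_.ointeg
      split
      · exact hint _ _
      · rw [hint _ _]; ring
    rw [show (fun x => _root_.ointeg μ f c x) = fun x => _root_.ointeg μ (fun s => max (f s) 0) c x - _root_.ointeg μ (fun s => max (-f s) 0) c x from funext hdecomp]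
    exact ((key _ hfp (fun s => le_max_right _ _)).measurable).sub
      ((key _ hfm (fun s => le_max_right _ _)).measurable)
  · -- locally bounded
    intro a b
    obtain ⟨C, hC⟩ := hf.2 a b
    refine ⟨|_root_.ointeg μ f c a| + (max C 0) * (μ (Ico a b)).toReal, fun s hs => ?_⟩
    have hch := chasles hμ hf c hs.1
    dsimp only; rw [hch]
    refine (abs_add_le _ _).trans (add_le_add le_rfl ?_)
    have : ‖∫ x in Ico a s, f x ∂μ‖ ≤ (max C 0) * (μ (Ico a s)).toReal := by
      refine norm_setIntegral_le_of_norm_le_const ((finIco hμ a s)) (fun x hx => ?_)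
      exact (hC x ⟨hx.1, hx.2.trans_le hs.2.le⟩).trans (le_max_left _ _)
    refine this.trans (mul_le_mul_of_nonneg_left ?_ (le_max_right C 0))
    exact ENNReal.toReal_mono (finIco hμ a b).ne (measure_mono (Ico_subset_Ico le_rfl hs.2.le))

lemma ointeg_add (hf : Loc f) (hh : Loc h) (c x : ℝ) :
    ointeg μ (fun s => f s + h s) c x = ointeg μ f c x + ointeg μ h c x := by
  unfold ointeg
  split
  · rw [integral_add (hf.integrableOn hμ c x) (hh.integrableOn hμ c x)]
  · rw [integral_add (hf.integrableOn hμ x c) (hh.integrableOn hμ x c)]; ring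

lemma ointeg_smul (q : ℝ) (c x : ℝ) :
    ointeg μ (fun s => q * f s) c x = q * ointeg μ f c x := by
  unfold ointeg
  split
  · rw [integral_const_mul]
  · rw [integral_const_mul]; ring

end

section main
variable (hg : Monotone g)
  (hμ : ∀ a b : ℝ, a ≤ b → μ (Set.Ico a b) = ENNReal.ofReal (g b - g a))
include hg hμ

lemma meas_singleton (s : ℝ) : μ {s} = ENNReal.ofReal (jumpOf g s) := by
  set S : ℕ → Set ℝ := fun n => Ico s (s + 1 / (n + 1)) with hS
  have hpos : ∀ n : ℕ, (0:ℝ) < 1 / (n + 1) := fun n => by positivity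
  have hanti : Antitone S := by
    intro n m hnm
    apply Set.Ico_subset_Ico le_rfl
    have : (1:ℝ) / (m + 1) ≤ 1 / (n + 1) := by
      apply one_div_le_one_div_of_le (by positivity)
      have := (Nat.cast_le (α := ℝ)).2 hnm; linarith
    linarith
  have hiInter : ⋂ n, S n = {s} := by
    ext x
    simp only [mem_iInter, mem_singleton_iff, hS, Set.mem_Ico]
    constructor
    · intro hx
      by_contra hne
      have hlt : s < x := lt_of_le_of_ne (hx 0).1 (Ne.symm hne)
      obtain ⟨n, hn⟩ := exists_nat_one_div_lt (sub_pos.2 hlt)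
      have := (hx n).2
      push_cast at hn ⊢
      linarith
    · rintro rfl
      exact fun n => ⟨le_rfl, by linarith [hpos n]⟩
  have h1 : Filter.Tendsto (fun n => μ (S n)) Filter.atTop (nhds (μ {s})) := by
    rw [← hiInter]
    exact tendsto_measure_iInter_atTop
      (fun n => measurableSet_Ico.nullMeasurableSet) hanti
      ⟨0, ((finIco hμ _ _).ne)⟩
  have h2 : Filter.Tendsto (fun n => μ (S n)) Filter.atTop
      (nhds (ENNReal.ofReal (jumpOf g s))) := by
    have hrw : ∀ n : ℕ, μ (S n) = ENNReal.ofReal (g (s + 1 / (n + 1)) - g s) := by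
      intro n; exact hμ _ _ (by linarith [hpos n])
    simp only [hrw]
    have ht : Filter.Tendsto (fun n : ℕ => s + 1 / (n + 1 : ℝ)) Filter.atTop (nhdsWithin s (Ioi s)) := by
      rw [tendsto_nhdsWithin_iff]
      constructor
      · have : Filter.Tendsto (fun n : ℕ => 1 / ((n : ℝ) + 1)) Filter.atTop (nhds 0) :=
          tendsto_one_div_add_atTop_nhds_zero_nat
        have := (tendsto_const_nhds (x := s) (f := Filter.atTop (α := ℕ))).add this
        simpa using this
      · exact Filter.Eventually.of_forall fun n => by simp only [Set.mem_Ioi]; linarith [hpos n]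
    have hcomp := (hg.tendsto_rightLim s).comp ht
    have : Filter.Tendsto (fun n : ℕ => g (s + 1 / (n + 1)) - g s) Filter.atTop
        (nhds (Function.rightLim g s - g s)) := hcomp.sub_const _
    exact (ENNReal.continuous_ofReal.tendsto _).comp this
  exact tendsto_nhds_unique h1 h2

lemma jump_nonneg (s : ℝ) : 0 ≤ jumpOf g s := sub_nonneg.2 (hg.le_rightLim le_rfl)

/-- The region `{t < s}` of the square, computed by Fubini. -/
lemma regionLower (hf : Loc f) (hh : Loc h) {a b : ℝ} (hab : a ≤ b) :
    ∫ z in {z : ℝ × ℝ | z.2 < z.1}, f z.1 * h z.2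
        ∂((μ.restrict (Ico a b)).prod (μ.restrict (Ico a b)))
      = ∫ s in Ico a b, ointeg μ h a s * f s ∂μ := by
  set ν := μ.restrict (Ico a b) with hν
  haveI : IsFiniteMeasure ν := finRestrict hμ a b
  have hfi : Integrable f ν := hf.integrableOn hμ a b
  have hhi : Integrable h ν := hh.integrableOn hμ a b
  have hφi : Integrable (fun z : ℝ × ℝ => f z.1 * h z.2) (ν.prod ν) := hfi.mul_prod hhi
  have hmD : MeasurableSet {z : ℝ × ℝ | z.2 < z.1} :=
    measurableSet_lt measurable_snd measurable_fst
  rw [← integral_indicator hmD]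
  have hind : ∀ z : ℝ × ℝ, ({z : ℝ × ℝ | z.2 < z.1}).indicator
      (fun z : ℝ × ℝ => f z.1 * h z.2) z = f z.1 * (Iio z.1).indicator h z.2 := by
    rintro ⟨s, t⟩
    by_cases hts : t < s
    · rw [Set.indicator_of_mem (by exact hts), Set.indicator_of_mem (by exact hts)]
    · rw [Set.indicator_of_notMem (by exact hts), Set.indicator_of_notMem (by exact hts),
        mul_zero]
  rw [show ({z : ℝ × ℝ | z.2 < z.1}).indicator (fun z : ℝ × ℝ => f z.1 * h z.2)
      = fun z : ℝ × ℝ => f z.1 * (Iio z.1).indicator h z.2 from funext hind]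
  rw [MeasureTheory.integral_prod _ (by rw [← funext hind]; exact hφi.indicator hmD)]
  rw [hν]
  apply setIntegral_congr_fun measurableSet_Ico
  intro s hs
  dsimp only
  rw [integral_const_mul, integral_indicator measurableSet_Iio, ← hν,
    Measure.restrict_restrict measurableSet_Iio]
  have hset : Iio s ∩ Ico a b = Ico a s := by
    ext t
    simp only [Set.mem_inter_iff, Set.mem_Iio, Set.mem_Ico]
    exact ⟨fun ⟨h1, h2⟩ => ⟨h2.1, h1⟩, fun ⟨h1, h2⟩ => ⟨h2, h1, h2.trans hs.2⟩⟩
  rw [hset, ointeg_eq hμ a hs.1, mul_comm]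

/-- The diagonal of the square. -/
lemma regionDiag (hf : Loc f) (hh : Loc h) {a b : ℝ} (hab : a ≤ b) :
    ∫ z in {z : ℝ × ℝ | z.1 = z.2}, f z.1 * h z.2
        ∂((μ.restrict (Ico a b)).prod (μ.restrict (Ico a b)))
      = ∫ s in Ico a b, f s * h s * jumpOf g s ∂μ := by
  set ν := μ.restrict (Ico a b) with hν
  haveI : IsFiniteMeasure ν := finRestrict hμ a b
  have hfi : Integrable f ν := hf.integrableOn hμ a b
  have hhi : Integrable h ν := hh.integrableOn hμ a b
  have hφi : Integrable (fun z : ℝ × ℝ => f z.1 * h z.2) (ν.prod ν) := hfi.mul_prod hhi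
  have hmD : MeasurableSet {z : ℝ × ℝ | z.1 = z.2} :=
    measurableSet_eq_fun measurable_fst measurable_snd
  rw [← integral_indicator hmD]
  have hind : ∀ z : ℝ × ℝ, ({z : ℝ × ℝ | z.1 = z.2}).indicator
      (fun z : ℝ × ℝ => f z.1 * h z.2) z = f z.1 * ({z.1} : Set ℝ).indicator h z.2 := by
    rintro ⟨s, t⟩
    by_cases hts : s = t
    · rw [Set.indicator_of_mem (by exact hts), Set.indicator_of_mem (by exact hts.symm)]
    · rw [Set.indicator_of_notMem (by exact hts),
        Set.indicator_of_notMem (by exact fun hc => hts (by exact hc.symm)), mul_zero]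
  rw [show ({z : ℝ × ℝ | z.1 = z.2}).indicator (fun z : ℝ × ℝ => f z.1 * h z.2)
      = fun z : ℝ × ℝ => f z.1 * ({z.1} : Set ℝ).indicator h z.2 from funext hind]
  rw [MeasureTheory.integral_prod _ (by rw [← funext hind]; exact hφi.indicator hmD)]
  rw [hν]
  apply setIntegral_congr_fun measurableSet_Ico
  intro s hs
  dsimp only
  rw [integral_const_mul, integral_indicator (measurableSet_singleton s),
    integral_singleton]
  have hνs : ν {s} = μ {s} := by
    rw [hν, Measure.restrict_apply (measurableSet_singleton s),
      inter_eq_self_of_subset_left (singleton_subset_iff.2 hs)]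
  rw [← hν, Measure.real, hνs, meas_singleton hg hμ s, ENNReal.toReal_ofReal (jump_nonneg hg hμ s)]
  simp [mul_comm, mul_assoc, mul_left_comm]

/-- Integration by parts on `Ico a b`. -/
lemma keyIBP (hf : Loc f) (hh : Loc h) {a b : ℝ} (hab : a ≤ b) :
    (∫ s in Ico a b, f s ∂μ) * (∫ s in Ico a b, h s ∂μ)
      = ∫ t in Ico a b, (ointeg μ f a t * h t + ointeg μ h a t * f t
          + f t * h t * jumpOf g t) ∂μ := by
  set ν := μ.restrict (Ico a b) with hν
  haveI : IsFiniteMeasure ν := finRestrict hμ a b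
  have hfi : Integrable f ν := hf.integrableOn hμ a b
  have hhi : Integrable h ν := hh.integrableOn hμ a b
  have hφi : Integrable (fun z : ℝ × ℝ => f z.1 * h z.2) (ν.prod ν) := hfi.mul_prod hhi
  have hstart : (∫ s in Ico a b, f s ∂μ) * (∫ s in Ico a b, h s ∂μ)
      = ∫ z, f z.1 * h z.2 ∂(ν.prod ν) := (integral_prod_mul f h).symm
  -- partition of the square
  set D1 : Set (ℝ × ℝ) := {z | z.2 < z.1} with hD1
  set D2 : Set (ℝ × ℝ) := {z | z.1 < z.2} with hD2
  set D3 : Set (ℝ × ℝ) := {z | z.1 = z.2} with hD3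
  have hmD1 : MeasurableSet D1 := measurableSet_lt measurable_snd measurable_fst
  have hmD2 : MeasurableSet D2 := measurableSet_lt measurable_fst measurable_snd
  have hmD3 : MeasurableSet D3 := measurableSet_eq_fun measurable_fst measurable_snd
  have hsplit : ∫ z, f z.1 * h z.2 ∂(ν.prod ν)
      = (∫ z in D1, f z.1 * h z.2 ∂(ν.prod ν)) + ((∫ z in D2, f z.1 * h z.2 ∂(ν.prod ν))
        + ∫ z in D3, f z.1 * h z.2 ∂(ν.prod ν)) := by
    have hU : D1 ∪ (D2 ∪ D3) = Set.univ := by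
      ext z
      simp only [hD1, hD2, hD3, Set.mem_union, mem_setOf_eq, Set.mem_univ, iff_true]
      rcases lt_trichotomy z.2 z.1 with hlt | heq | hgt
      · exact Or.inl hlt
      · exact Or.inr (Or.inr heq.symm)
      · exact Or.inr (Or.inl hgt)
    have hd23 : Disjoint D2 D3 := by
      rw [Set.disjoint_iff]
      rintro z ⟨h2, h3⟩
      exact absurd h3 (ne_of_lt h2)
    have hd123 : Disjoint D1 (D2 ∪ D3) := by
      rw [Set.disjoint_iff]
      rintro z ⟨h1, h23⟩
      rcases h23 with h2 | h3
      · exact absurd ((show z.2 < z.1 from h1).trans (show z.1 < z.2 from h2)) (lt_irrefl _)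
      · exact absurd h3 (ne_of_gt h1)
    calc ∫ z, f z.1 * h z.2 ∂(ν.prod ν)
        = ∫ z in D1 ∪ (D2 ∪ D3), f z.1 * h z.2 ∂(ν.prod ν) := by
          rw [hU, setIntegral_univ]
      _ = _ := by
          rw [setIntegral_union hd123 (hmD2.union hmD3) (hφi.integrableOn)
              (hφi.integrableOn),
            setIntegral_union hd23 hmD3 (hφi.integrableOn) (hφi.integrableOn)]
  -- the upper region via swap
  have hswap : ∫ z in D2, f z.1 * h z.2 ∂(ν.prod ν)
      = ∫ z in D1, h z.1 * f z.2 ∂(ν.prod ν) := by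
    rw [← integral_indicator hmD2, ← integral_indicator hmD1]
    have : ∀ z : ℝ × ℝ, D2.indicator (fun z : ℝ × ℝ => f z.1 * h z.2) z
        = (D1.indicator (fun z : ℝ × ℝ => h z.1 * f z.2)) z.swap := by
      rintro ⟨s, t⟩
      by_cases hst : s < t
      · rw [Set.indicator_of_mem (by exact hst), Set.indicator_of_mem (by exact hst)]
        show f s * h t = h t * f s
        ring
      · rw [Set.indicator_of_notMem (by exact hst), Set.indicator_of_notMem (by exact hst)]
    rw [show D2.indicator (fun z : ℝ × ℝ => f z.1 * h z.2)
        = fun z : ℝ × ℝ => (D1.indicator (fun z : ℝ × ℝ => h z.1 * f z.2)) z.swap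
        from funext this]
    exact integral_prod_swap _
  rw [hstart, hsplit, hswap, regionLower hg hμ hf hh hab, regionLower hg hμ hh hf hab,
    regionDiag hg hμ hf hh hab]
  have I1 : IntegrableOn (fun t => ointeg μ h a t * f t) (Ico a b) μ :=
    ((hh.ointeg hμ a).mul hf).integrableOn hμ a b
  have I2 : IntegrableOn (fun t => ointeg μ f a t * h t) (Ico a b) μ :=
    ((hf.ointeg hμ a).mul hh).integrableOn hμ a b
  have I3 : IntegrableOn (fun t => f t * h t * jumpOf g t) (Ico a b) μ :=
    ((hf.mul hh).mul (loc_jump hg)).integrableOn hμ a b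
  have I12 : IntegrableOn (fun t => ointeg μ f a t * h t + ointeg μ h a t * f t)
      (Ico a b) μ := I2.add I1
  simp only [hν]
  rw [integral_add I12 I3, integral_add I2 I1]
  ring


omit hg hμ in
lemma loc_zero : Loc (fun _ : ℝ => (0:ℝ)) := ⟨measurable_const, fun _ _ => ⟨0, by simp⟩⟩

omit hg hμ in
lemma loc_sum {ι : Type*} (s : Finset ι) (F : ι → ℝ → ℝ) (hF : ∀ i ∈ s, Loc (F i)) :
    Loc (fun t => ∑ i ∈ s, F i t) := by
  classical
  induction s using Finset.induction with
  | empty => simpa using loc_zero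
  | @insert i s hi ih =>
    simp only [Finset.sum_insert hi]
    exact (hF i (Finset.mem_insert_self i s)).add
      (ih fun j hj => hF j (Finset.mem_insert_of_mem hj))

omit hg in
lemma ointeg_sum {ι : Type*} (s : Finset ι) (F : ι → ℝ → ℝ) (hF : ∀ i ∈ s, Loc (F i))
    (c x : ℝ) :
    ointeg μ (fun t => ∑ i ∈ s, F i t) c x = ∑ i ∈ s, ointeg μ (F i) c x := by
  unfold ointeg
  split
  · rw [integral_finset_sum s (fun i hi => (hF i hi).integrableOn hμ c x)]
  · rw [integral_finset_sum s (fun i hi => (hF i hi).integrableOn hμ x c)]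
    rw [← Finset.sum_neg_distrib]

omit hg in
lemma ointeg_base (hf : Loc f) {x t x₀ : ℝ} (hxt : x ≤ t) (htx0 : t < x₀) :
    ointeg μ f x₀ t = ointeg μ f x t - ∫ s in Ico x x₀, f s ∂μ := by
  rw [ointeg_eq_neg hμ x₀ htx0, ointeg_eq hμ x hxt, splitInt hμ hf hxt htx0.le]
  ring

/-- The product rule for oriented integrals. -/
lemma prodRule (hf : Loc f) (hh : Loc h) (x₀ x : ℝ) :
    ointeg μ f x₀ x * ointeg μ h x₀ x
      = ointeg μ (fun t => ointeg μ f x₀ t * h t + ointeg μ h x₀ t * f t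
          + f t * h t * jumpOf g t) x₀ x := by
  rcases le_or_gt x₀ x with hx | hx
  · rw [ointeg_eq hμ x₀ hx, ointeg_eq hμ x₀ hx, ointeg_eq hμ x₀ hx]
    exact keyIBP hg hμ hf hh hx
  · set X := ∫ s in Ico x x₀, f s ∂μ with hX
    set Y := ∫ s in Ico x x₀, h s ∂μ with hY
    have hF : Loc (fun t => ointeg μ f x t) := hf.ointeg hμ x
    have hH : Loc (fun t => ointeg μ h x t) := hh.ointeg hμ x
    have hcong : ∀ t ∈ Ico x x₀,
        ointeg μ f x₀ t * h t + ointeg μ h x₀ t * f t + f t * h t * jumpOf g t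
          = (ointeg μ f x t * h t + ointeg μ h x t * f t + f t * h t * jumpOf g t)
            + ((-X) * h t + (-Y) * f t) := by
      intro t ht
      rw [ointeg_base hμ hf ht.1 ht.2, ointeg_base hμ hh ht.1 ht.2, ← hX, ← hY]
      ring
    have hmain := keyIBP hg hμ hf hh hx.le
    rw [ointeg_eq_neg hμ x₀ hx, ointeg_eq_neg hμ x₀ hx, ointeg_eq_neg hμ x₀ hx, ← hX, ← hY]
    rw [setIntegral_congr_fun measurableSet_Ico hcong]
    have I1 : IntegrableOn (fun t => ointeg μ f x t * h t + ointeg μ h x t * f t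
        + f t * h t * jumpOf g t) (Ico x x₀) μ :=
      (((hF.mul hh).add (hH.mul hf)).add ((hf.mul hh).mul (loc_jump hg))).integrableOn hμ x x₀
    have I2 : IntegrableOn (fun t => (-X) * h t + (-Y) * f t) (Ico x x₀) μ :=
      ((hh.const_mul (-X)).add (hf.const_mul (-Y))).integrableOn hμ x x₀
    have I2a : IntegrableOn (fun t => (-X) * h t) (Ico x x₀) μ :=
      (hh.const_mul (-X)).integrableOn hμ x x₀
    have I2b : IntegrableOn (fun t => (-Y) * f t) (Ico x x₀) μ :=
      (hf.const_mul (-Y)).integrableOn hμ x x₀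
    rw [integral_add I1 I2, integral_add I2a I2b, integral_const_mul, integral_const_mul,
      ← hmain, ← hX, ← hY]
    ring


variable {x₀ : ℝ}

omit hg in
lemma loc_gMon (x₀ : ℝ) (n : ℕ) : Loc (gMon μ x₀ n) := by
  induction n with
  | zero => exact loc_one
  | succ n ih =>
    have : gMon μ x₀ (n+1) = fun x => ((n:ℝ)+1) * ointeg μ (gMon μ x₀ n) x₀ x := rfl
    rw [this]
    exact (ih.ointeg hμ x₀).const_mul _

lemma loc_hAux (x₀ : ℝ) (j k : ℕ) : Loc (hAux g μ x₀ j k) := by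
  induction j with
  | zero =>
    have : hAux g μ x₀ 0 k
        = fun x => ((k:ℝ)+1) * ointeg μ (fun s => gMon μ x₀ k s * jumpOf g s) x₀ x := rfl
    rw [this]
    exact ((((loc_gMon hμ x₀ k).mul (loc_jump hg))).ointeg hμ x₀).const_mul _
  | succ j ih =>
    have : hAux g μ x₀ (j+1) k
        = fun x => ((k:ℝ)+(j:ℝ)+2) * ointeg μ (hAux g μ x₀ j k) x₀ x := rfl
    rw [this]
    exact (ih.ointeg hμ x₀).const_mul _

lemma keyId (x₀ : ℝ) (n : ℕ) (x : ℝ) :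
    gMon μ x₀ 1 x * gMon μ x₀ n x
      = gMon μ x₀ (n+1) x + ∑ i ∈ Finset.range n, hAux g μ x₀ i (n - 1 - i) x := by
  induction n generalizing x with
  | zero => simp [show gMon μ x₀ 0 x = 1 from rfl]
  | succ n ih =>
    have hne : ((n:ℝ)+1) ≠ 0 := by positivity
    have e1 : ∀ t, ointeg μ (gMon μ x₀ 0) x₀ t = gMon μ x₀ 1 t := by
      intro t
      have : gMon μ x₀ 1 t = (((0:ℕ):ℝ) + 1) * ointeg μ (gMon μ x₀ 0) x₀ t := rfl
      rw [this]; norm_num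
    have e4 : ∀ t, gMon μ x₀ (n+1) t = ((n:ℝ)+1) * ointeg μ (gMon μ x₀ n) x₀ t := fun t => rfl
    have eOI : ∀ t, ointeg μ (gMon μ x₀ n) x₀ t = ((n:ℝ)+1)⁻¹ * gMon μ x₀ (n+1) t := by
      intro t
      rw [e4 t]
      field_simp
    have hp := prodRule hg hμ (loc_gMon hμ x₀ 0) (loc_gMon hμ x₀ n) x₀ x
    have hcong : (fun t => ointeg μ (gMon μ x₀ 0) x₀ t * gMon μ x₀ n t
          + ointeg μ (gMon μ x₀ n) x₀ t * gMon μ x₀ 0 t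
          + gMon μ x₀ 0 t * gMon μ x₀ n t * jumpOf g t)
        = (fun t => gMon μ x₀ (n+1) t + (((n:ℝ)+1)⁻¹ * gMon μ x₀ (n+1) t
            + ((∑ i ∈ Finset.range n, hAux g μ x₀ i (n - 1 - i) t)
              + gMon μ x₀ n t * jumpOf g t))) := by
      funext t
      have h0 : gMon μ x₀ 0 t = 1 := rfl
      rw [e1 t, eOI t, h0, ih t]
      ring
    rw [hcong] at hp
    have locGn1 := loc_gMon hμ x₀ (n+1)
    have locGn := loc_gMon hμ x₀ n
    have locS : Loc (fun t => ∑ i ∈ Finset.range n, hAux g μ x₀ i (n - 1 - i) t) :=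
      loc_sum (Finset.range n) _ (fun i _ => loc_hAux hg hμ x₀ i _)
    have locJ : Loc (fun t => gMon μ x₀ n t * jumpOf g t) := locGn.mul (loc_jump hg)
    simp only [ointeg_add hμ locGn1 ((locGn1.const_mul (((n:ℝ)+1)⁻¹)).add (locS.add locJ)),
      ointeg_add hμ (locGn1.const_mul (((n:ℝ)+1)⁻¹)) (locS.add locJ),
      ointeg_add hμ locS locJ, ointeg_smul hμ,
      ointeg_sum hμ (Finset.range n) _ (fun i _ => loc_hAux hg hμ x₀ i _)] at hp
    -- now hp is fully linearized; convert all oriented integrals to monomials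
    rw [e1 x, eOI x] at hp
    have e5 : ointeg μ (gMon μ x₀ (n+1)) x₀ x = ((n:ℝ)+2)⁻¹ * gMon μ x₀ (n+2) x := by
      have : gMon μ x₀ (n+2) x = (((n+1:ℕ):ℝ)+1) * ointeg μ (gMon μ x₀ (n+1)) x₀ x := rfl
      rw [this]
      push_cast
      field_simp
      ring
    have e6 : ointeg μ (fun s => gMon μ x₀ n s * jumpOf g s) x₀ x
        = ((n:ℝ)+1)⁻¹ * hAux g μ x₀ 0 n x := by
      have : hAux g μ x₀ 0 n x
          = ((n:ℝ)+1) * ointeg μ (fun s => gMon μ x₀ n s * jumpOf g s) x₀ x := rfl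
      rw [this]
      field_simp
    have e7 : ∀ i ∈ Finset.range n, ointeg μ (hAux g μ x₀ i (n - 1 - i)) x₀ x
        = ((n:ℝ)+1)⁻¹ * hAux g μ x₀ (i+1) (n - 1 - i) x := by
      intro i hi
      have hi' : i < n := Finset.mem_range.1 hi
      have hc : (((n - 1 - i : ℕ)):ℝ) + ((i:ℕ):ℝ) + 2 = (n:ℝ) + 1 := by
        have h1 : (n - 1 - i : ℕ) = n - (1 + i) := Nat.sub_sub n 1 i
        rw [h1, Nat.cast_sub (by omega : 1 + i ≤ n)]
        push_cast
        ring
      have : hAux g μ x₀ (i+1) (n - 1 - i) x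
          = ((((n - 1 - i : ℕ)):ℝ) + ((i:ℕ):ℝ) + 2)
            * ointeg μ (hAux g μ x₀ i (n - 1 - i)) x₀ x := rfl
      rw [this, hc]
      field_simp
    rw [Finset.sum_congr rfl e7, ← Finset.mul_sum, e5, e6] at hp
    -- final sum manipulation on the target
    have hsum : ∑ i ∈ Finset.range (n+1), hAux g μ x₀ i (n + 1 - 1 - i) x
        = (∑ i ∈ Finset.range n, hAux g μ x₀ (i+1) (n - 1 - i) x) + hAux g μ x₀ 0 n x := by
      rw [Finset.sum_range_succ']
      congr 1
      exact Finset.sum_congr rfl fun i _ => by congr 1; omega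
    rw [hsum]
    have e8 : gMon μ x₀ (n+1+1) x = gMon μ x₀ (n+2) x := rfl
    rw [e8]
    have h1 : ((n:ℝ)+1) * ((n:ℝ)+1)⁻¹ = 1 := mul_inv_cancel₀ hne
    have hne2 : ((n:ℝ)+2) ≠ 0 := by positivity
    have h2 : ((n:ℝ)+2) * ((n:ℝ)+2)⁻¹ = 1 := mul_inv_cancel₀ hne2
    linear_combination ((n:ℝ)+1) * hp
      + (∑ i ∈ Finset.range n, hAux g μ x₀ (i+1) (n - 1 - i) x + hAux g μ x₀ 0 n x
         - gMon μ x₀ 1 x * gMon μ x₀ (n+1) x + ((n:ℝ)+2)⁻¹ * gMon μ x₀ (n+2) x) * h1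
      + gMon μ x₀ (n+2) x * h2

end main



end S13

/-- For every `n` and `x`:
`g_n(x) = g_1(x)^n − Σ_{k=1}^{n−1} g_1(x)^{n−1−k} Σ_{j=1}^{k} h_{j,k−j}(x)`. -/
theorem stmt13 (g : ℝ → ℝ) (μ : MeasureTheory.Measure ℝ) (x₀ : ℝ)
    (hg : Monotone g) (hlc : ∀ x : ℝ, ContinuousWithinAt g (Set.Iio x) x)
    (hμ : ∀ a b : ℝ, a ≤ b → μ (Set.Ico a b) = ENNReal.ofReal (g b - g a)) :
    ∀ n : ℕ, ∀ x : ℝ,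
      gMon μ x₀ n x = (gMon μ x₀ 1 x) ^ n -
        ∑ k ∈ Finset.Icc 1 (n - 1), (gMon μ x₀ 1 x) ^ (n - 1 - k) *
          ∑ j ∈ Finset.Icc 1 k, hAux g μ x₀ (j - 1) (k - j) x := by
  intro n x
  -- translate Icc-sums of `hAux` into range-sums
  have hIccRange : ∀ k : ℕ, (∑ j ∈ Finset.Icc 1 k, hAux g μ x₀ (j-1) (k-j) x)
      = ∑ i ∈ Finset.range k, hAux g μ x₀ i (k - 1 - i) x := by
    intro k
    rw [← Finset.Ico_add_one_right_eq_Icc, Finset.sum_Ico_eq_sum_range]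
    refine Finset.sum_congr (by simp) fun i _ => ?_
    congr 1 <;> omega
  induction n with
  | zero => simp [show gMon μ x₀ 0 x = 1 from rfl]
  | succ n ih =>
    have hG : gMon μ x₀ (n+1) x = gMon μ x₀ 1 x * gMon μ x₀ n x
        - ∑ j ∈ Finset.Icc 1 n, hAux g μ x₀ (j-1) (n-j) x := by
      rw [hIccRange n]
      linarith [S13.keyId hg hμ x₀ n x]
    rw [hG, ih]
    rcases Nat.eq_zero_or_pos n with rfl | hn
    · simp
    · obtain ⟨m, rfl⟩ := Nat.exists_eq_succ_of_ne_zero hn.ne'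
      simp only [Nat.succ_eq_add_one]
      rw [show m + 1 + 1 - 1 = m + 1 from rfl]
      conv_rhs => rw [Finset.sum_Icc_succ_top (by omega : 1 ≤ m+1)]
      simp only [Nat.add_sub_cancel]
      have hmul : gMon μ x₀ 1 x * ∑ k ∈ Finset.Icc 1 m, gMon μ x₀ 1 x ^ (m - k)
            * (∑ j ∈ Finset.Icc 1 k, hAux g μ x₀ (j-1) (k-j) x)
          = ∑ k ∈ Finset.Icc 1 m, gMon μ x₀ 1 x ^ (m + 1 - k)
            * (∑ j ∈ Finset.Icc 1 k, hAux g μ x₀ (j-1) (k-j) x) := by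
        rw [Finset.mul_sum]
        refine Finset.sum_congr rfl fun k hk => ?_
        have hk' := Finset.mem_Icc.1 hk
        rw [← mul_assoc, ← pow_succ']
        congr 2
        omega
      rw [show m + 1 - (m + 1) = 0 from by omega, pow_zero, one_mul]
      linear_combination -hmul
end

section
/- Suppose f(x) = Σ_{n≥0} a_n g_n(x) converges absolutely on [c₁,c₂] with x₀ ∈ (c₁,c₂). Then for any shift point s ∈ (x₀,c₂), one has f(x) = Σ_{k≥0} ( (1/k!) Σ_{n≥k} a_n · n!/(n−k)! · g_{n−k}(s) ) · g_{s,k}(x) for all x ∈ [s,c₂], with absolute convergence; the analogous statement holds for s ∈ (c₁,x₀) on [c₁,s]. -/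
open MeasureTheory Set Finset

section Helpers

variable {μ : MeasureTheory.Measure ℝ}

lemma gMon_zero (c x : ℝ) : gMon μ c 0 x = 1 := rfl

lemma gMon_succ (c x : ℝ) (n : ℕ) :
    gMon μ c (n+1) x = ((n : ℝ) + 1) * ointeg μ (gMon μ c n) c x := rfl

lemma ointeg_swap (f : ℝ → ℝ) (a b : ℝ) : ointeg μ f a b = - ointeg μ f b a := by
  rcases lt_trichotomy a b with h | h | h
  · rw [ointeg, ointeg, if_pos h.le, if_neg (not_le.mpr h), neg_neg]
  · subst h; simp [ointeg]
  · rw [ointeg, ointeg, if_neg (not_le.mpr h), if_pos h.le]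

lemma ointeg_of_ge (f : ℝ → ℝ) {c t : ℝ} (h : c ≤ t) :
    ointeg μ f c t = ∫ x in Ico c t, f x ∂μ := by rw [ointeg, if_pos h]

lemma ointeg_of_le (f : ℝ → ℝ) {c t : ℝ} (h : t ≤ c) :
    ointeg μ f c t = - ∫ x in Ico t c, f x ∂μ := by
  rcases eq_or_lt_of_le h with rfl | h'
  · simp [ointeg, Ico_self]
  · rw [ointeg, if_neg (not_le.mpr h')]

lemma ointeg_core (f : ℝ → ℝ) (hInt : ∀ p q : ℝ, IntegrableOn f (Ico p q) μ)
    {a b c : ℝ} (hab : a ≤ b) (hbc : b ≤ c) :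
    ointeg μ f a c = ointeg μ f a b + ointeg μ f b c := by
  rw [ointeg_of_ge f (hab.trans hbc), ointeg_of_ge f hab, ointeg_of_ge f hbc,
    ← Ico_union_Ico_eq_Ico hab hbc,
    setIntegral_union (Set.Ico_disjoint_Ico_same) measurableSet_Ico
      (hInt a b) (hInt b c)]

lemma ointeg_chasles (f : ℝ → ℝ) (hInt : ∀ p q : ℝ, IntegrableOn f (Ico p q) μ)
    (a b c : ℝ) : ointeg μ f a c = ointeg μ f a b + ointeg μ f b c := by
  rcases le_total a b with hab | hba <;> rcases le_total b c with hbc | hcb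
  · exact ointeg_core f hInt hab hbc
  · rcases le_total a c with hac | hca
    · have h := ointeg_core f hInt hac hcb
      have hs := ointeg_swap (μ := μ) f b c
      linarith
    · have h := ointeg_core f hInt hca hab
      have hs := ointeg_swap (μ := μ) f b c
      have hs2 := ointeg_swap (μ := μ) f a c
      linarith
  · rcases le_total a c with hac | hca
    · have h := ointeg_core f hInt hba hac
      have hs := ointeg_swap (μ := μ) f a b
      linarith
    · have h := ointeg_core f hInt hbc hca
      have hs := ointeg_swap (μ := μ) f a b
      have hs2 := ointeg_swap (μ := μ) f a c
      linarith
  · have h := ointeg_core f hInt hcb hba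
    have hs := ointeg_swap (μ := μ) f a b
    have hs2 := ointeg_swap (μ := μ) f a c
    have hs3 := ointeg_swap (μ := μ) f b c
    linarith

end Helpers


section Facts

variable {μ : MeasureTheory.Measure ℝ}

structure GMonFacts (μ : MeasureTheory.Measure ℝ) (c : ℝ) (n : ℕ) : Prop where
  mono : MonotoneOn (gMon μ c n) (Ici c)
  anti : AntitoneOn (fun x => (-1:ℝ)^n * gMon μ c n x) (Iic c)
  nonneg : ∀ x, c ≤ x → 0 ≤ gMon μ c n x
  nonneg' : ∀ x, x ≤ c → 0 ≤ (-1:ℝ)^n * gMon μ c n x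
  integ : ∀ a b : ℝ, IntegrableOn (gMon μ c n) (Ico a b) μ

lemma gMonFacts (hfin : ∀ p q : ℝ, μ (Ico p q) ≠ ⊤) (c : ℝ) : ∀ n : ℕ, GMonFacts μ c n := by
  intro n
  induction n with
  | zero =>
    have h0 : gMon μ c 0 = fun _ => (1:ℝ) := rfl
    refine ⟨?_, ?_, ?_, ?_, ?_⟩
    · rw [h0]; exact monotoneOn_const
    · simp only [h0, pow_zero, one_mul]; exact antitoneOn_const
    · intro x _; rw [gMon_zero]; norm_num
    · intro x _; rw [gMon_zero]; norm_num
    · intro a b; rw [h0]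
      exact integrableOn_const (hfin a b)
  | succ n IH =>
    have hInt := IH.integ
    have hmono : MonotoneOn (gMon μ c (n+1)) (Ici c) := by
      intro x hx y hy hxy
      rw [gMon_succ, gMon_succ]
      have h := ointeg_chasles (μ := μ) _ hInt c x y
      have h0 : 0 ≤ ointeg μ (gMon μ c n) x y := by
        rw [ointeg_of_ge _ hxy]
        refine setIntegral_nonneg measurableSet_Ico fun t ht => ?_
        exact IH.nonneg t (le_trans hx ht.1)
      have hn : (0:ℝ) ≤ (n:ℝ) + 1 := by positivity
      nlinarith
    have hnn : ∀ x, c ≤ x → 0 ≤ gMon μ c (n+1) x := by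
      intro x hx
      rw [gMon_succ, ointeg_of_ge _ hx]
      have : 0 ≤ ∫ t in Ico c x, gMon μ c n t ∂μ :=
        setIntegral_nonneg measurableSet_Ico fun t ht => IH.nonneg t ht.1
      positivity
    have hkey : ∀ t : ℝ, t ≤ c → (-1:ℝ)^(n+1) * gMon μ c (n+1) t
        = ((n:ℝ)+1) * ((-1:ℝ)^n * ∫ u in Ico t c, gMon μ c n u ∂μ) := by
      intro t ht
      rw [gMon_succ, ointeg_of_le _ ht, pow_succ]
      ring
    have hpos : ∀ p q : ℝ, p ≤ q → q ≤ c →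
        0 ≤ (-1:ℝ)^n * ∫ u in Ico p q, gMon μ c n u ∂μ := by
      intro p q hpq hqc
      rw [← MeasureTheory.integral_const_mul]
      refine setIntegral_nonneg measurableSet_Ico fun t ht => ?_
      exact IH.nonneg' t (le_trans ht.2.le hqc)
    have hanti : AntitoneOn (fun x => (-1:ℝ)^(n+1) * gMon μ c (n+1) x) (Iic c) := by
      intro x hx y hy hxy
      simp only []
      rw [hkey x hx, hkey y hy]
      have hsplit : ∫ u in Ico x c, gMon μ c n u ∂μ
          = (∫ u in Ico x y, gMon μ c n u ∂μ) + ∫ u in Ico y c, gMon μ c n u ∂μ := by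
        rw [← Ico_union_Ico_eq_Ico hxy hy,
          setIntegral_union Set.Ico_disjoint_Ico_same measurableSet_Ico (hInt x y) (hInt y c)]
      have h0 := hpos x y hxy hy
      have hn : (0:ℝ) ≤ (n:ℝ) + 1 := by positivity
      have : (-1:ℝ)^n * ∫ u in Ico y c, gMon μ c n u ∂μ
          ≤ (-1:ℝ)^n * ∫ u in Ico x c, gMon μ c n u ∂μ := by
        rw [hsplit]; nlinarith
      nlinarith
    have hnn' : ∀ x, x ≤ c → 0 ≤ (-1:ℝ)^(n+1) * gMon μ c (n+1) x := by
      intro x hx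
      rw [hkey x hx]
      have := hpos x c hx le_rfl
      positivity
    have hmeas : Measurable (gMon μ c (n+1)) := by
      have hF1 : Monotone (fun x => gMon μ c (n+1) (max x c)) := by
        intro x y hxy
        exact hmono (le_max_right x c) (le_max_right y c) (max_le_max hxy le_rfl)
      have hF2 : Antitone (fun x => (-1:ℝ)^(n+1) * gMon μ c (n+1) (min x c)) := by
        intro x y hxy
        exact hanti (min_le_right x c) (min_le_right y c) (min_le_min hxy le_rfl)
      have hone : ((-1:ℝ)^(n+1)) * ((-1:ℝ)^(n+1)) = 1 := by
        rw [← pow_add, ← two_mul, pow_mul]; norm_num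
      have heq : gMon μ c (n+1) = fun x => if c ≤ x then gMon μ c (n+1) (max x c)
          else (-1:ℝ)^(n+1) * ((-1:ℝ)^(n+1) * gMon μ c (n+1) (min x c)) := by
        funext x
        split_ifs with h
        · rw [max_eq_left h]
        · push_neg at h
          rw [min_eq_left h.le, ← mul_assoc, hone, one_mul]
      rw [heq]
      exact Measurable.ite measurableSet_Ici (hF1.measurable)
        (measurable_const.mul hF2.measurable)
    have hinteg : ∀ a b : ℝ, IntegrableOn (gMon μ c (n+1)) (Ico a b) μ := by
      intro a b
      refine Measure.integrableOn_of_bounded (hfin a b) hmeas.aestronglyMeasurable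
        (M := |gMon μ c (n+1) a| + |gMon μ c (n+1) b|) ?_
      refine (ae_restrict_mem measurableSet_Ico).mono fun t ht => ?_
      rw [Real.norm_eq_abs]
      rcases le_or_gt c t with h | h
      · have h1 : |gMon μ c (n+1) t| = gMon μ c (n+1) t := abs_of_nonneg (hnn t h)
        have h2 : gMon μ c (n+1) t ≤ gMon μ c (n+1) b :=
          hmono h (h.trans ht.2.le) ht.2.le
        have h3 : gMon μ c (n+1) b ≤ |gMon μ c (n+1) b| := le_abs_self _
        have h4 : (0:ℝ) ≤ |gMon μ c (n+1) a| := abs_nonneg _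
        linarith
      · have habs1 : |gMon μ c (n+1) t| = (-1:ℝ)^(n+1) * gMon μ c (n+1) t := by
          rw [← abs_of_nonneg (hnn' t h.le), abs_mul, abs_pow, abs_neg, abs_one, one_pow, one_mul]
        have h2 : (-1:ℝ)^(n+1) * gMon μ c (n+1) t ≤ (-1:ℝ)^(n+1) * gMon μ c (n+1) a :=
          hanti (ht.1.trans h.le) h.le ht.1
        have h3 : (-1:ℝ)^(n+1) * gMon μ c (n+1) a ≤ |gMon μ c (n+1) a| := by
          rw [← abs_of_nonneg (hnn' a (ht.1.trans h.le)), abs_mul, abs_pow, abs_neg, abs_one,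
            one_pow, one_mul]
        have h4 : (0:ℝ) ≤ |gMon μ c (n+1) b| := abs_nonneg _
        linarith
    exact ⟨hmono, hanti, hnn, hnn', hinteg⟩

end Facts

section Binom

variable {μ : MeasureTheory.Measure ℝ}

lemma ointeg_finset_sum {ι : Type*} (F : Finset ι) (f : ι → ℝ → ℝ) (co : ι → ℝ)
    (hInt : ∀ i ∈ F, ∀ p q : ℝ, IntegrableOn (f i) (Ico p q) μ) (a b : ℝ) :
    ointeg μ (fun u => ∑ i ∈ F, co i * f i u) a b = ∑ i ∈ F, co i * ointeg μ (f i) a b := by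
  have key : ∀ p q : ℝ, (∫ u in Ico p q, (∑ i ∈ F, co i * f i u) ∂μ)
      = ∑ i ∈ F, co i * ∫ u in Ico p q, f i u ∂μ := by
    intro p q
    rw [integral_finset_sum _ (fun i hi => (hInt i hi p q).const_mul _)]
    exact Finset.sum_congr rfl fun i _ => by rw [MeasureTheory.integral_const_mul]
  rcases le_total a b with h | h
  · rw [ointeg_of_ge _ h, key a b]
    refine Finset.sum_congr rfl fun i _ => ?_
    rw [ointeg_of_ge _ h]
  · rw [ointeg_of_le _ h, key b a, ← Finset.sum_neg_distrib]
    refine Finset.sum_congr rfl fun i _ => ?_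
    rw [ointeg_of_le _ h, mul_neg]

lemma ointeg_gMon (s t : ℝ) (k : ℕ) :
    ointeg μ (gMon μ s k) s t = ((k:ℝ)+1)⁻¹ * gMon μ s (k+1) t := by
  rw [gMon_succ, inv_mul_cancel_left₀ (by positivity)]

lemma gMon_binom (hfin : ∀ p q : ℝ, μ (Ico p q) ≠ ⊤) (c s : ℝ) : ∀ (n : ℕ) (t : ℝ),
    gMon μ c n t
      = ∑ k ∈ Finset.range (n+1), (n.choose k : ℝ) * gMon μ c (n-k) s * gMon μ s k t := by
  intro n
  induction n with
  | zero => intro t; simp [gMon_zero]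
  | succ n IH =>
    intro t
    have hintc := (gMonFacts hfin c n).integ
    have hfun : gMon μ c n = fun u => ∑ k ∈ Finset.range (n+1),
        ((n.choose k : ℝ) * gMon μ c (n-k) s) * gMon μ s k u := by
      funext u
      rw [IH u]
    have hlin : ointeg μ (gMon μ c n) s t = ∑ k ∈ Finset.range (n+1),
        ((n.choose k : ℝ) * gMon μ c (n-k) s) * (((k:ℝ)+1)⁻¹ * gMon μ s (k+1) t) := by
      rw [hfun, ointeg_finset_sum (μ := μ) _ _ _
        (fun k _ p q => (gMonFacts hfin s k).integ p q) s t]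
      exact Finset.sum_congr rfl fun k _ => by rw [ointeg_gMon]
    rw [gMon_succ, ointeg_chasles _ hintc c s t, hlin, mul_add, ← gMon_succ, Finset.mul_sum]
    conv_rhs => rw [Finset.sum_range_succ']
    have h0 : ((n+1).choose 0 : ℝ) * gMon μ c (n+1-0) s * gMon μ s 0 t = gMon μ c (n+1) s := by
      simp [gMon_zero]
    rw [h0, add_comm]
    congr 1
    refine Finset.sum_congr rfl fun k hk => ?_
    have hc : ((n+1) * (n.choose k) : ℝ) = (((n+1).choose (k+1) : ℕ) : ℝ) * ((k:ℝ)+1) := by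
      exact_mod_cast congrArg (Nat.cast (R := ℝ)) (Nat.add_one_mul_choose_eq n k)
    have hsub : n + 1 - (k + 1) = n - k := by omega
    rw [hsub]
    have hk1 : ((k:ℝ)+1) ≠ 0 := by positivity
    field_simp
    linear_combination (gMon μ c (n - k) s * gMon μ s (k + 1) t) * hc

lemma abs_eq_negpow {y : ℝ} {m : ℕ} (h : 0 ≤ (-1:ℝ)^m * y) : |y| = (-1:ℝ)^m * y := by
  have h2 : |(-1:ℝ)^m * y| = |y| := by
    rw [abs_mul, abs_pow, abs_neg, abs_one, one_pow, one_mul]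
  rw [← h2, abs_of_nonneg h]

lemma signRight (hfin : ∀ p q : ℝ, μ (Ico p q) ≠ ⊤) {x₀ s x : ℝ}
    (h1 : x₀ ≤ s) (h2 : s ≤ x) (n : ℕ) :
    ∑ k ∈ Finset.range (n+1), (n.choose k : ℝ) * |gMon μ x₀ (n-k) s| * |gMon μ s k x|
      = |gMon μ x₀ n x| := by
  have hx : x₀ ≤ x := h1.trans h2
  calc ∑ k ∈ Finset.range (n+1), (n.choose k : ℝ) * |gMon μ x₀ (n-k) s| * |gMon μ s k x|
      = ∑ k ∈ Finset.range (n+1), (n.choose k : ℝ) * gMon μ x₀ (n-k) s * gMon μ s k x := by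
        refine Finset.sum_congr rfl fun k _ => ?_
        rw [abs_of_nonneg ((gMonFacts hfin x₀ (n-k)).nonneg s h1),
          abs_of_nonneg ((gMonFacts hfin s k).nonneg x h2)]
    _ = gMon μ x₀ n x := (gMon_binom hfin x₀ s n x).symm
    _ = |gMon μ x₀ n x| := (abs_of_nonneg ((gMonFacts hfin x₀ n).nonneg x hx)).symm

lemma signLeft (hfin : ∀ p q : ℝ, μ (Ico p q) ≠ ⊤) {x₀ s x : ℝ}
    (h1 : x ≤ s) (h2 : s ≤ x₀) (n : ℕ) :
    ∑ k ∈ Finset.range (n+1), (n.choose k : ℝ) * |gMon μ x₀ (n-k) s| * |gMon μ s k x|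
      = |gMon μ x₀ n x| := by
  have hx : x ≤ x₀ := h1.trans h2
  calc ∑ k ∈ Finset.range (n+1), (n.choose k : ℝ) * |gMon μ x₀ (n-k) s| * |gMon μ s k x|
      = ∑ k ∈ Finset.range (n+1),
          (-1:ℝ)^n * ((n.choose k : ℝ) * gMon μ x₀ (n-k) s * gMon μ s k x) := by
        refine Finset.sum_congr rfl fun k hk => ?_
        have hk' : k ≤ n := Nat.lt_succ_iff.mp (Finset.mem_range.mp hk)
        have e1 := abs_eq_negpow ((gMonFacts hfin x₀ (n-k)).nonneg' s h2)
        have e2 := abs_eq_negpow ((gMonFacts hfin s k).nonneg' x h1)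
        have e3 : (-1:ℝ)^(n-k) * (-1:ℝ)^k = (-1:ℝ)^n := by
          rw [← pow_add, Nat.sub_add_cancel hk']
        rw [e1, e2]
        calc (n.choose k : ℝ) * ((-1:ℝ)^(n-k) * gMon μ x₀ (n-k) s)
              * ((-1:ℝ)^k * gMon μ s k x)
            = ((-1:ℝ)^(n-k) * (-1:ℝ)^k)
              * ((n.choose k : ℝ) * gMon μ x₀ (n-k) s * gMon μ s k x) := by ring
          _ = (-1:ℝ)^n * ((n.choose k : ℝ) * gMon μ x₀ (n-k) s * gMon μ s k x) := by rw [e3]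
    _ = (-1:ℝ)^n * ∑ k ∈ Finset.range (n+1),
          (n.choose k : ℝ) * gMon μ x₀ (n-k) s * gMon μ s k x := (Finset.mul_sum _ _ _).symm
    _ = (-1:ℝ)^n * gMon μ x₀ n x := by rw [← gMon_binom hfin x₀ s n x]
    _ = |gMon μ x₀ n x| := (abs_eq_negpow ((gMonFacts hfin x₀ n).nonneg' x hx)).symm

end Binom

/-- The shifted coefficients `(1/k!) Σ_{n≥k} aₙ · n!/(n−k)! · g_{n−k}(s)` appearing when
recentering a `g`-monomial series at `s`. -/
noncomputable def coefShift {𝕜 : Type*} [RCLike 𝕜] (μ : MeasureTheory.Measure ℝ)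
    (x₀ : ℝ) (a : ℕ → 𝕜) (s : ℝ) (k : ℕ) : 𝕜 :=
  (((Nat.factorial k : ℝ)⁻¹ : ℝ) : 𝕜) *
    ∑' n : ℕ, a (n + k) * (((Nat.factorial (n + k) : ℝ) / (Nat.factorial n : ℝ) : ℝ) : 𝕜) *
      ((gMon μ x₀ n s : ℝ) : 𝕜)

section Core

set_option maxHeartbeats 1000000 in
lemma core {𝕜 : Type*} [RCLike 𝕜] (μ : MeasureTheory.Measure ℝ) (x₀ s x : ℝ) (a : ℕ → 𝕜)
    (hsum : Summable fun n : ℕ => ‖a n‖ * |gMon μ x₀ n x|)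
    (hE : ∀ n : ℕ, ∑ k ∈ Finset.range (n+1),
        (n.choose k : ℝ) * |gMon μ x₀ (n-k) s| * |gMon μ s k x| = |gMon μ x₀ n x|)
    (hB : ∀ n : ℕ, gMon μ x₀ n x
        = ∑ k ∈ Finset.range (n+1), (n.choose k : ℝ) * gMon μ x₀ (n-k) s * gMon μ s k x) :
    Summable (fun k : ℕ => ‖coefShift μ x₀ a s k‖ * |gMon μ s k x|) ∧
    HasSum (fun k : ℕ => coefShift μ x₀ a s k * ((gMon μ s k x : ℝ) : 𝕜))
      (∑' n : ℕ, a n * ((gMon μ x₀ n x : ℝ) : 𝕜)) := by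
  classical
  set T : ℕ × ℕ → ℝ := fun p =>
    ‖a (p.2 + p.1)‖ * (((p.2 + p.1).choose p.1 : ℕ) : ℝ) * |gMon μ x₀ p.2 s| * |gMon μ s p.1 x|
    with hTdef
  set S : ℕ × ℕ → 𝕜 := fun p =>
    a (p.2 + p.1) * ((((p.2 + p.1).choose p.1 : ℕ) : ℝ) : 𝕜) * ((gMon μ x₀ p.2 s : ℝ) : 𝕜)
      * ((gMon μ s p.1 x : ℝ) : 𝕜) with hSdef
  have hT0 : ∀ p, 0 ≤ T p := fun p => by positivity
  have hnorm : ∀ p, ‖S p‖ = T p := by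
    intro p
    simp only [hSdef, hTdef, norm_mul, RCLike.norm_ofReal, Real.norm_eq_abs]
    rw [abs_of_nonneg (by positivity : (0:ℝ) ≤ (((p.2 + p.1).choose p.1 : ℕ) : ℝ))]
  have hrow : ∀ n : ℕ, ∑ p ∈ Finset.HasAntidiagonal.antidiagonal n, T p = ‖a n‖ * |gMon μ x₀ n x| := by
    intro n
    rw [Finset.Nat.sum_antidiagonal_eq_sum_range_succ_mk, ← hE n, Finset.mul_sum]
    refine Finset.sum_congr rfl fun k hk => ?_
    have hk' : k ≤ n := Nat.lt_succ_iff.mp (Finset.mem_range.mp hk)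
    have h1 : n - k + k = n := Nat.sub_add_cancel hk'
    simp only [hTdef, h1]
    ring
  have hsig : Summable (T ∘ Finset.HasAntidiagonal.sigmaAntidiagonalEquivProd) := by
    apply (summable_sigma_of_nonneg (fun q => hT0 _)).mpr
    refine ⟨fun n => Summable.of_finite, ?_⟩
    have heq : ∀ n : ℕ, (∑' p : ↥(Finset.HasAntidiagonal.antidiagonal n), T p)
        = ‖a n‖ * |gMon μ x₀ n x| := by
      intro n
      rw [Finset.tsum_subtype]
      exact hrow n
    exact (summable_congr heq).mpr hsum
  have hTsum : Summable T := Finset.HasAntidiagonal.sigmaAntidiagonalEquivProd.summable_iff.mp hsig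
  have hSsum : Summable S := Summable.of_norm (hTsum.congr fun p => (hnorm p).symm)
  have hTslice : ∀ k, Summable fun m => T (k, m) := fun k => hTsum.prod_factor k
  have hSslice : ∀ k, Summable fun m => S (k, m) := fun k => hSsum.prod_factor k
  have hfack : ∀ k : ℕ, ((Nat.factorial k : ℝ)) ≠ 0 :=
    fun k => Nat.cast_ne_zero.mpr (Nat.factorial_ne_zero k)
  have harith : ∀ k m : ℕ, (((m + k).choose k : ℕ) : ℝ)
      = (Nat.factorial k : ℝ)⁻¹ * ((Nat.factorial (m + k) : ℝ) / (Nat.factorial m : ℝ)) := by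
    intro k m
    rw [Nat.cast_choose ℝ (Nat.le_add_left k m), show m + k - k = m by omega]
    field_simp
  have hkey : ∀ k : ℕ,
      (∑' m, S (k, m)) = coefShift μ x₀ a s k * ((gMon μ s k x : ℝ) : 𝕜) ∧
      ‖coefShift μ x₀ a s k‖ * |gMon μ s k x| ≤ ∑' m, T (k, m) := by
    intro k
    set v : ℕ → 𝕜 := fun m => a (m + k)
        * (((Nat.factorial (m + k) : ℝ) / (Nat.factorial m : ℝ) : ℝ) : 𝕜)
        * ((gMon μ x₀ m s : ℝ) : 𝕜) with hvdef
    have hcoef : coefShift μ x₀ a s k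
        = (((Nat.factorial k : ℝ)⁻¹ : ℝ) : 𝕜) * ∑' m, v m := rfl
    have hSv : ∀ m, S (k, m)
        = (((Nat.factorial k : ℝ)⁻¹ : ℝ) : 𝕜) * v m * ((gMon μ s k x : ℝ) : 𝕜) := by
      intro m
      simp only [hSdef, hvdef]
      rw [harith k m]
      push_cast
      ring
    have heq : (∑' m, S (k, m)) = coefShift μ x₀ a s k * ((gMon μ s k x : ℝ) : 𝕜) := by
      rcases eq_or_ne (gMon μ s k x) 0 with h0 | h0
      · have hz : ∀ m, S (k, m) = 0 := by
          intro m; rw [hSv m, h0]; simp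
        rw [tsum_congr hz, tsum_zero, h0]
        simp
      · have hx0 : ((gMon μ s k x : ℝ) : 𝕜) ≠ 0 := RCLike.ofReal_ne_zero.mpr h0
        have hk0 : (((Nat.factorial k : ℝ)) : 𝕜) ≠ 0 := RCLike.ofReal_ne_zero.mpr (hfack k)
        have hk0' : ((Nat.factorial k : ℕ) : 𝕜) ≠ 0 :=
          Nat.cast_ne_zero.mpr (Nat.factorial_ne_zero k)
        have hvs : Summable v := by
          have h1 : Summable fun m => S (k, m)
              * (((gMon μ s k x : ℝ) : 𝕜)⁻¹ * (((Nat.factorial k : ℝ)) : 𝕜)) :=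
            (hSslice k).mul_right _
          refine h1.congr fun m => ?_
          rw [hSv m]
          push_cast
          field_simp
        calc (∑' m, S (k, m))
            = ∑' m, ((((Nat.factorial k : ℝ)⁻¹ : ℝ) : 𝕜) * v m * ((gMon μ s k x : ℝ) : 𝕜)) :=
              tsum_congr hSv
          _ = (∑' m, (((Nat.factorial k : ℝ)⁻¹ : ℝ) : 𝕜) * v m) * ((gMon μ s k x : ℝ) : 𝕜) :=
              tsum_mul_right
          _ = ((((Nat.factorial k : ℝ)⁻¹ : ℝ) : 𝕜) * ∑' m, v m) * ((gMon μ s k x : ℝ) : 𝕜) := by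
              rw [tsum_mul_left]
          _ = coefShift μ x₀ a s k * ((gMon μ s k x : ℝ) : 𝕜) := by rw [hcoef]
    refine ⟨heq, ?_⟩
    have hnormS : Summable fun m => ‖S (k, m)‖ :=
      (hTslice k).congr fun m => (hnorm (k, m)).symm
    have h1 : ‖coefShift μ x₀ a s k‖ * |gMon μ s k x|
        = ‖coefShift μ x₀ a s k * ((gMon μ s k x : ℝ) : 𝕜)‖ := by
      rw [norm_mul, RCLike.norm_ofReal]
    rw [h1, ← heq]
    calc ‖∑' m, S (k, m)‖ ≤ ∑' m, ‖S (k, m)‖ := norm_tsum_le_tsum_norm hnormS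
      _ = ∑' m, T (k, m) := tsum_congr fun m => hnorm (k, m)
  have hTcol : Summable fun k => ∑' m, T (k, m) :=
    ((summable_prod_of_nonneg hT0).mp hTsum).2
  constructor
  · exact Summable.of_nonneg_of_le (fun k => by positivity) (fun k => (hkey k).2) hTcol
  · have hsummable2 : Summable (fun k => coefShift μ x₀ a s k * ((gMon μ s k x : ℝ) : 𝕜)) := by
      refine Summable.of_norm_bounded hTcol fun k => ?_
      rw [norm_mul, RCLike.norm_ofReal]
      exact (hkey k).2
    have hfinal : (∑' k, coefShift μ x₀ a s k * ((gMon μ s k x : ℝ) : 𝕜))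
        = ∑' n, a n * ((gMon μ x₀ n x : ℝ) : 𝕜) := by
      have e1 : (∑' p : ℕ × ℕ, S p)
          = ∑' q : Σ n : ℕ, ↥(Finset.HasAntidiagonal.antidiagonal n), S (Finset.HasAntidiagonal.sigmaAntidiagonalEquivProd q) :=
        (Finset.HasAntidiagonal.sigmaAntidiagonalEquivProd.tsum_eq S).symm
      have e2 : (∑' q : Σ n : ℕ, ↥(Finset.HasAntidiagonal.antidiagonal n), S (Finset.HasAntidiagonal.sigmaAntidiagonalEquivProd q))
          = ∑' n : ℕ, ∑' p : ↥(Finset.HasAntidiagonal.antidiagonal n),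
              S (Finset.HasAntidiagonal.sigmaAntidiagonalEquivProd ⟨n, p⟩) :=
        Summable.tsum_sigma' (fun n => Summable.of_finite)
          (Finset.HasAntidiagonal.sigmaAntidiagonalEquivProd.summable_iff.mpr hSsum)
      have hfib : ∀ n : ℕ, (∑' p : ↥(Finset.HasAntidiagonal.antidiagonal n),
          S (Finset.HasAntidiagonal.sigmaAntidiagonalEquivProd ⟨n, p⟩)) = a n * ((gMon μ x₀ n x : ℝ) : 𝕜) := by
        intro n
        have hco : ∀ p : ↥(Finset.HasAntidiagonal.antidiagonal n),
            S (Finset.HasAntidiagonal.sigmaAntidiagonalEquivProd ⟨n, p⟩) = S ↑p := fun p => rfl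
        rw [tsum_congr hco, Finset.tsum_subtype, Finset.Nat.sum_antidiagonal_eq_sum_range_succ_mk,
          hB n, RCLike.ofReal_sum, Finset.mul_sum]
        refine Finset.sum_congr rfl fun k hk => ?_
        have hk' : k ≤ n := Nat.lt_succ_iff.mp (Finset.mem_range.mp hk)
        have h1 : n - k + k = n := Nat.sub_add_cancel hk'
        simp only [hSdef, h1]
        push_cast
        ring
      calc (∑' k, coefShift μ x₀ a s k * ((gMon μ s k x : ℝ) : 𝕜))
          = ∑' k, ∑' m, S (k, m) := tsum_congr fun k => ((hkey k).1).symm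
        _ = ∑' p : ℕ × ℕ, S p := (Summable.tsum_prod' hSsum hSslice).symm
        _ = ∑' q : Σ n : ℕ, ↥(Finset.HasAntidiagonal.antidiagonal n), S (Finset.HasAntidiagonal.sigmaAntidiagonalEquivProd q) := e1
        _ = ∑' n : ℕ, ∑' p : ↥(Finset.HasAntidiagonal.antidiagonal n),
              S (Finset.HasAntidiagonal.sigmaAntidiagonalEquivProd ⟨n, p⟩) := e2
        _ = ∑' n, a n * ((gMon μ x₀ n x : ℝ) : 𝕜) := tsum_congr hfib
    rw [← hfinal]
    exact hsummable2.hasSum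

end Core


/-- Change of center for `g`-monomial series: if `Σ aₙ gₙ(x)` converges absolutely on
`[c₁,c₂] ∋ x₀`, then for `s ∈ (x₀,c₂)` (resp. `s ∈ (c₁,x₀)`) the recentered series with
coefficients `coefShift` converges absolutely on `[s,c₂]` (resp. `[c₁,s]`) and sums to
`f(x) = Σ aₙ gₙ(x)` there. -/
theorem stmt15 {𝕜 : Type*} [RCLike 𝕜] (g : ℝ → ℝ) (μ : MeasureTheory.Measure ℝ)
    (hg : Monotone g) (hlc : ∀ x : ℝ, ContinuousWithinAt g (Set.Iio x) x)
    (hμ : ∀ a b : ℝ, a ≤ b → μ (Set.Ico a b) = ENNReal.ofReal (g b - g a))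
    (x₀ c₁ c₂ : ℝ) (hx₀ : x₀ ∈ Set.Ioo c₁ c₂) (a : ℕ → 𝕜)
    (habs : ∀ x ∈ Set.Icc c₁ c₂, Summable (fun n : ℕ => ‖a n‖ * |gMon μ x₀ n x|)) :
    ∀ s : ℝ,
      (s ∈ Set.Ioo x₀ c₂ → ∀ x ∈ Set.Icc s c₂,
        Summable (fun k : ℕ => ‖coefShift μ x₀ a s k‖ * |gMon μ s k x|) ∧
        HasSum (fun k : ℕ => coefShift μ x₀ a s k * ((gMon μ s k x : ℝ) : 𝕜))
          (∑' n : ℕ, a n * ((gMon μ x₀ n x : ℝ) : 𝕜))) ∧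
      (s ∈ Set.Ioo c₁ x₀ → ∀ x ∈ Set.Icc c₁ s,
        Summable (fun k : ℕ => ‖coefShift μ x₀ a s k‖ * |gMon μ s k x|) ∧
        HasSum (fun k : ℕ => coefShift μ x₀ a s k * ((gMon μ s k x : ℝ) : 𝕜))
          (∑' n : ℕ, a n * ((gMon μ x₀ n x : ℝ) : 𝕜))) := by
  have hfin : ∀ p q : ℝ, μ (Set.Ico p q) ≠ ⊤ := by
    intro p q
    rcases le_total p q with h | h
    · rw [hμ p q h]; exact ENNReal.ofReal_ne_top
    · rw [Set.Ico_eq_empty (not_lt.mpr h), measure_empty]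
      exact ENNReal.zero_ne_top
  intro s
  constructor
  · rintro ⟨hs1, hs2⟩ x ⟨hx1, hx2⟩
    have hxmem : x ∈ Set.Icc c₁ c₂ := ⟨hx₀.1.le.trans (hs1.le.trans hx1), hx2⟩
    exact core μ x₀ s x a (habs x hxmem) (fun n => signRight hfin hs1.le hx1 n)
      (fun n => gMon_binom hfin x₀ s n x)
  · rintro ⟨hs1, hs2⟩ x ⟨hx1, hx2⟩
    have hxmem : x ∈ Set.Icc c₁ c₂ := ⟨hx1, hx2.trans (hs2.le.trans hx₀.2.le)⟩
    exact core μ x₀ s x a (habs x hxmem) (fun n => signLeft hfin hx2 hs2.le n)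
      (fun n => gMon_binom hfin x₀ s n x)
end

section
/- If the series Σ_{n≥0} |a_n| |g_n(c)| converges at some point c < x₀ with Δg(c) > 0, then there exists M > 0 such that |a_n| ≤ M^{n+1}/n! for all n ≥ 0. -/
open MeasureTheory Set Finset

section Aux

variable (g : ℝ → ℝ) (μ : MeasureTheory.Measure ℝ)

/-- The signed monomial `h n x = (-1)^n g_n(x)`. -/
noncomputable def hMon (μ : MeasureTheory.Measure ℝ) (x₀ : ℝ) (n : ℕ) (x : ℝ) : ℝ :=
  (-1 : ℝ) ^ n * gMon μ x₀ n x

lemma hMon_succ (x₀ : ℝ) (n : ℕ) {x : ℝ} (hx : x ≤ x₀) :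
    hMon μ x₀ (n + 1) x = ((n : ℝ) + 1) * ∫ s in Set.Ico x x₀, hMon μ x₀ n s ∂μ := by
  rcases eq_or_lt_of_le hx with rfl | hx'
  · simp [hMon, gMon, ointeg]
  · simp only [hMon, gMon, ointeg, if_neg (not_le.mpr hx'), integral_const_mul]
    rw [pow_succ]
    ring

lemma hMon_antitone (hg : Monotone g)
    (hμ : ∀ a b : ℝ, a ≤ b → μ (Set.Ico a b) = ENNReal.ofReal (g b - g a)) (x₀ : ℝ) (n : ℕ) :
    AntitoneOn (hMon μ x₀ n) (Set.Iic x₀) ∧ ∀ x ≤ x₀, 0 ≤ hMon μ x₀ n x := by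
  induction n with
  | zero =>
    refine ⟨fun x _ y _ _ => by simp [hMon, gMon], fun x _ => by simp [hMon, gMon]⟩
  | succ n ih =>
    obtain ⟨hant, hnn⟩ := ih
    have hint : ∀ x : ℝ, x ≤ x₀ → IntegrableOn (hMon μ x₀ n) (Set.Ico x x₀) μ := by
      intro x hx
      refine ⟨(aemeasurable_restrict_of_antitoneOn measurableSet_Ico
          (hant.mono (fun s hs => le_of_lt hs.2))).aestronglyMeasurable,
        HasFiniteIntegral.restrict_of_bounded (C := hMon μ x₀ n x) ?_ ?_⟩
      · rw [hμ x x₀ hx]; exact ENNReal.ofReal_lt_top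
      · filter_upwards [ae_restrict_mem measurableSet_Ico] with s hs
        rw [Real.norm_eq_abs, abs_of_nonneg (hnn s hs.2.le)]
        exact hant hx hs.2.le hs.1
    have hnn' : ∀ x : ℝ, x ≤ x₀ →
        (0 : ℝ → ℝ) ≤ᵐ[μ.restrict (Set.Ico x x₀)] hMon μ x₀ n := by
      intro x hx
      filter_upwards [ae_restrict_mem measurableSet_Ico] with s hs
      exact hnn s hs.2.le
    constructor
    · intro x hx y hy hxy
      rw [hMon_succ μ x₀ n hx, hMon_succ μ x₀ n hy]
      have : ∫ s in Set.Ico y x₀, hMon μ x₀ n s ∂μ ≤ ∫ s in Set.Ico x x₀, hMon μ x₀ n s ∂μ :=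
        setIntegral_mono_set (hint x hx) (hnn' x hx)
          (HasSubset.Subset.eventuallyLE (Set.Ico_subset_Ico_left hxy))
      have hn1 : (0:ℝ) ≤ (n : ℝ) + 1 := by positivity
      nlinarith
    · intro x hx
      rw [hMon_succ μ x₀ n hx]
      have : 0 ≤ ∫ s in Set.Ico x x₀, hMon μ x₀ n s ∂μ :=
        integral_nonneg_of_ae (hnn' x hx)
      positivity

lemma meas_singleton_ge (hg : Monotone g)
    (hμ : ∀ a b : ℝ, a ≤ b → μ (Set.Ico a b) = ENNReal.ofReal (g b - g a)) (c : ℝ) :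
    ENNReal.ofReal (jumpOf g c) ≤ μ {c} := by
  have hS : ∀ k : ℕ, μ (Set.Ico c (c + 1 / (k + 1))) = ENNReal.ofReal (g (c + 1/(k+1)) - g c) := by
    intro k
    apply hμ
    have : (0:ℝ) < 1 / (k+1) := by positivity
    linarith
  have hiInter : ⋂ k : ℕ, Set.Ico c (c + 1 / ((k:ℝ) + 1)) = {c} := by
    ext x
    simp only [Set.mem_iInter, Set.mem_Ico, Set.mem_singleton_iff]
    constructor
    · intro h
      have h0 := h 0
      refine le_antisymm ?_ h0.1
      by_contra hlt
      push_neg at hlt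
      obtain ⟨k, hk⟩ := exists_nat_one_div_lt (show (0:ℝ) < x - c by linarith)
      have := (h k).2
      linarith
    · rintro rfl
      refine fun k => ⟨le_rfl, ?_⟩
      have : (0:ℝ) < 1 / ((k:ℝ)+1) := by positivity
      linarith
  have htend : Filter.Tendsto (fun k : ℕ => μ (Set.Ico c (c + 1 / ((k:ℝ) + 1)))) Filter.atTop
      (nhds (μ {c})) := by
    rw [← hiInter]
    apply tendsto_measure_iInter_atTop
    · exact fun k => measurableSet_Ico.nullMeasurableSet
    · intro i j hij
      apply Set.Ico_subset_Ico_right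
      have hji : ((i:ℝ)+1) ≤ ((j:ℝ)+1) := by exact_mod_cast Nat.succ_le_succ hij
      have h1 : (1:ℝ)/((j:ℝ)+1) ≤ 1/((i:ℝ)+1) := by
        apply one_div_le_one_div_of_le
        · positivity
        · exact hji
      linarith
    · exact ⟨0, by rw [hS 0]; exact ENNReal.ofReal_ne_top⟩
  apply ge_of_tendsto htend
  filter_upwards with k
  rw [hS k]
  apply ENNReal.ofReal_le_ofReal
  have : Function.rightLim g c ≤ g (c + 1/(k+1)) := by
    apply hg.rightLim_le
    have : (0:ℝ) < 1 / ((k:ℝ)+1) := by positivity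
    linarith
  simp only [jumpOf]
  linarith

lemma hMon_lower (hg : Monotone g)
    (hμ : ∀ a b : ℝ, a ≤ b → μ (Set.Ico a b) = ENNReal.ofReal (g b - g a))
    (x₀ c : ℝ) (hc : c < x₀) (n : ℕ) :
    (n.factorial : ℝ) * (jumpOf g c) ^ n ≤ hMon μ x₀ n c := by
  have hΔ0 : 0 ≤ jumpOf g c := by
    simp only [jumpOf]; linarith [hg.le_rightLim (le_refl c)]
  induction n with
  | zero => simp [hMon, gMon]
  | succ n ih =>
    obtain ⟨hant, hnn⟩ := hMon_antitone g μ hg hμ x₀ n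
    have hint : IntegrableOn (hMon μ x₀ n) (Set.Ico c x₀) μ := by
      refine ⟨(aemeasurable_restrict_of_antitoneOn measurableSet_Ico
          (hant.mono (fun s hs => le_of_lt hs.2))).aestronglyMeasurable,
        HasFiniteIntegral.restrict_of_bounded (C := hMon μ x₀ n c) ?_ ?_⟩
      · rw [hμ c x₀ hc.le]; exact ENNReal.ofReal_lt_top
      · filter_upwards [ae_restrict_mem measurableSet_Ico] with s hs
        rw [Real.norm_eq_abs, abs_of_nonneg (hnn s hs.2.le)]
        exact hant hc.le hs.2.le hs.1
    have hnn' : (0 : ℝ → ℝ) ≤ᵐ[μ.restrict (Set.Ico c x₀)] hMon μ x₀ n := by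
      filter_upwards [ae_restrict_mem measurableSet_Ico] with s hs
      exact hnn s hs.2.le
    have h1 : ∫ s in ({c} : Set ℝ), hMon μ x₀ n s ∂μ ≤ ∫ s in Set.Ico c x₀, hMon μ x₀ n s ∂μ :=
      setIntegral_mono_set hint hnn'
        (HasSubset.Subset.eventuallyLE (Set.singleton_subset_iff.mpr (Set.mem_Ico.mpr ⟨le_rfl, hc⟩)))
    rw [integral_singleton] at h1
    have hT : jumpOf g c ≤ (μ {c}).toReal := by
      have hfin : μ {c} ≠ ⊤ := by
        refine ne_top_of_le_ne_top ?_ (measure_mono (show ({c} : Set ℝ) ⊆ Set.Ico c x₀ by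
          simp only [Set.singleton_subset_iff]; exact Set.mem_Ico.mpr ⟨le_rfl, hc⟩))
        rw [hμ c x₀ hc.le]; exact ENNReal.ofReal_ne_top
      have := ENNReal.toReal_mono hfin (meas_singleton_ge g μ hg hμ c)
      rwa [ENNReal.toReal_ofReal hΔ0] at this
    have h2 : jumpOf g c * ((n.factorial : ℝ) * jumpOf g c ^ n)
        ≤ (μ {c}).toReal * hMon μ x₀ n c := by
      apply mul_le_mul hT ih (by positivity) ENNReal.toReal_nonneg
    rw [hMon_succ μ x₀ n hc.le]
    have hfc : ((n+1).factorial : ℝ) = ((n:ℝ)+1) * (n.factorial : ℝ) := by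
      push_cast [Nat.factorial_succ]; ring
    rw [hfc, pow_succ]
    have hn1 : (0:ℝ) ≤ (n:ℝ) + 1 := by positivity
    simp only [smul_eq_mul, measureReal_def] at h1
    nlinarith [h1, h2]

end Aux

/-- If `Σ |aₙ| |gₙ(c)|` converges at some `c < x₀` which is a discontinuity point of `g`
(`Δg(c) > 0`), then there is `M > 0` with `|aₙ| ≤ M^{n+1}/n!` for all `n`. -/


theorem stmt16 {𝕜 : Type*} [RCLike 𝕜] (g : ℝ → ℝ) (μ : MeasureTheory.Measure ℝ)
    (hg : Monotone g) (hlc : ∀ x : ℝ, ContinuousWithinAt g (Set.Iio x) x)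
    (hμ : ∀ a b : ℝ, a ≤ b → μ (Set.Ico a b) = ENNReal.ofReal (g b - g a))
    (x₀ c : ℝ) (hc : c < x₀) (hjump : 0 < jumpOf g c)
    (a : ℕ → 𝕜) (ha : Summable (fun n : ℕ => ‖a n‖ * |gMon μ x₀ n c|)) :
    ∃ M > (0 : ℝ), ∀ n : ℕ, ‖a n‖ ≤ M ^ (n + 1) / (Nat.factorial n : ℝ) := by
  set Δ := jumpOf g c with hΔdef
  have hlow : ∀ n : ℕ, (n.factorial : ℝ) * Δ ^ n ≤ |gMon μ x₀ n c| := by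
    intro n
    refine (hMon_lower g μ hg hμ x₀ c hc n).trans ((le_abs_self _).trans (le_of_eq ?_))
    rw [hMon, abs_mul, abs_pow, abs_neg, abs_one, one_pow, one_mul]
  set C := ∑' n : ℕ, ‖a n‖ * |gMon μ x₀ n c| with hCdef
  have hC : ∀ n : ℕ, ‖a n‖ * |gMon μ x₀ n c| ≤ C := by
    intro n
    exact Summable.le_tsum ha n (fun i _ => mul_nonneg (norm_nonneg _) (abs_nonneg _))
  have hC0 : 0 ≤ C := le_trans (mul_nonneg (norm_nonneg _) (abs_nonneg _)) (hC 0)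
  refine ⟨max (C + 1) (max 1 Δ⁻¹), lt_of_lt_of_le one_pos ((le_max_left 1 Δ⁻¹).trans
    (le_max_right _ _)), fun n => ?_⟩
  set M := max (C + 1) (max 1 Δ⁻¹) with hMdef
  have hM1 : (1:ℝ) ≤ M := (le_max_left 1 Δ⁻¹).trans (le_max_right _ _)
  have hMC : C ≤ M := by
    have : C ≤ C + 1 := by linarith
    exact this.trans (le_max_left _ _)
  have hMΔ : Δ⁻¹ ≤ M := ((le_max_right 1 Δ⁻¹).trans (le_max_right _ _))
  have hfacpos : (0:ℝ) < (n.factorial : ℝ) := by exact_mod_cast n.factorial_pos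
  rw [le_div_iff₀ hfacpos]
  have key : ‖a n‖ * (n.factorial : ℝ) * Δ ^ n ≤ C := by
    calc ‖a n‖ * (n.factorial : ℝ) * Δ ^ n = ‖a n‖ * ((n.factorial : ℝ) * Δ ^ n) := by ring
    _ ≤ ‖a n‖ * |gMon μ x₀ n c| := by
        exact mul_le_mul_of_nonneg_left (hlow n) (norm_nonneg _)
    _ ≤ C := hC n
  have h1 : ‖a n‖ * (n.factorial : ℝ) ≤ C / Δ ^ n := by
    rw [le_div_iff₀ (pow_pos hjump n)]
    exact key
  refine h1.trans ?_
  have h2 : C / Δ ^ n = C * (Δ⁻¹) ^ n := by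
    rw [div_eq_mul_inv, inv_pow]
  rw [h2, pow_succ']
  apply mul_le_mul hMC (pow_le_pow_left₀ (inv_nonneg.mpr hjump.le) hMΔ n)
    (pow_nonneg (inv_nonneg.mpr hjump.le) n) (by linarith)
end

section
/- Let g be a derivator with g^C = 0 and x₀ ∈ ℝ. Then for every λ and every x ≥ x₀, the exponential series exp_g(λ;x₀)(x) = Σ_{n≥0} λ^n g_n(x)/n! equals the (unconditionally convergent) infinite product Π_{y ∈ [x₀,x) ∩ D_g} (1 + λ Δg(y)). -/
open MeasureTheory Set Finset

open Filter Topology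

section auxiliary

private theorem myPowersetTendsto {ι : Type*} [DecidableEq ι] :
    Filter.Tendsto (fun s : Finset ι => s.powerset) Filter.atTop Filter.atTop := by
  apply Filter.tendsto_atTop_atTop.2
  intro B
  refine ⟨B.sup id, fun s hs => ?_⟩
  intro t ht
  exact Finset.mem_powerset.2 (le_trans (Finset.le_sup (f := id) ht) hs)

private theorem mySummableProd {ι : Type*} [DecidableEq ι] {c : ι → ℝ} (hc : ∀ i, 0 ≤ c i) (hs : Summable c) :
    Summable (fun t : Finset ι => ∏ i ∈ t, c i) := by
  apply summable_of_sum_le (c := Real.exp (∑' i, c i))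
  · intro t
    exact Finset.prod_nonneg fun i _ => hc i
  · intro T
    calc ∑ t ∈ T, ∏ i ∈ t, c i
        ≤ ∑ t ∈ (T.sup id).powerset, ∏ i ∈ t, c i := by
          apply Finset.sum_le_sum_of_subset_of_nonneg
          · intro t ht
            exact Finset.mem_powerset.2 (Finset.le_sup (f := id) ht)
          · intro t _ _
            exact Finset.prod_nonneg fun i _ => hc i
      _ = ∏ i ∈ T.sup id, (c i + 1) := by
          rw [Finset.prod_add]
          apply Finset.sum_congr rfl
          intro t _
          simp
      _ ≤ ∏ i ∈ T.sup id, Real.exp (c i) := by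
          apply Finset.prod_le_prod
          · intro i _; have := hc i; linarith
          · intro i _
            have := Real.add_one_le_exp (c i)
            linarith
      _ = Real.exp (∑ i ∈ T.sup id, c i) := (Real.exp_sum _ _).symm
      _ ≤ Real.exp (∑' i, c i) :=
          Real.exp_le_exp.2 (Summable.sum_le_tsum _ (fun i _ => hc i) hs)

private theorem myHasProdOneAdd {𝕜 : Type*} [RCLike 𝕜] {ι : Type*} [DecidableEq ι] (f : ι → 𝕜)
    (h : Summable (fun t : Finset ι => ∏ i ∈ t, ‖f i‖)) :
    HasProd (fun i => 1 + f i) (∑' t : Finset ι, ∏ i ∈ t, f i) := by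
  have hsum : Summable (fun t : Finset ι => ∏ i ∈ t, f i) := by
    apply Summable.of_norm
    simpa [norm_prod] using h
  have hS := hsum.hasSum
  have key : ∀ s : Finset ι, ∏ i ∈ s, (1 + f i) = ∑ t ∈ s.powerset, ∏ i ∈ t, f i := by
    intro s
    have : ∏ i ∈ s, (1 + f i) = ∏ i ∈ s, (f i + 1) := by
      apply Finset.prod_congr rfl; intro i _; ring
    rw [this, Finset.prod_add]
    apply Finset.sum_congr rfl
    intro t _
    simp
  have := hS.comp myPowersetTendsto
  unfold HasProd
  convert this using 1
  funext s
  exact key s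
  simp only [SummationFilter.unconditional_filter]

private theorem myJumpNonneg {g : ℝ → ℝ} (hg : Monotone g) (y : ℝ) : 0 ≤ jumpOf g y :=
  sub_nonneg.2 (hg.le_rightLim le_rfl)

private theorem myMeasSingleton {g : ℝ → ℝ} {μ : MeasureTheory.Measure ℝ} (hg : Monotone g)
    (hμ : ∀ a b : ℝ, a ≤ b → μ (Set.Ico a b) = ENNReal.ofReal (g b - g a)) (y : ℝ) :
    μ {y} = ENNReal.ofReal (jumpOf g y) := by
  have hpos : ∀ n : ℕ, (0:ℝ) < 1 / (n + 1) := fun n => by positivity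
  have hseq : Tendsto (fun n : ℕ => y + 1 / ((n:ℝ) + 1)) atTop (𝓝[>] y) := by
    apply tendsto_nhdsWithin_of_tendsto_nhds_of_eventually_within
    · have h0 : Tendsto (fun n : ℕ => 1 / ((n:ℝ) + 1)) atTop (𝓝 0) :=
        tendsto_one_div_add_atTop_nhds_zero_nat
      simpa using tendsto_const_nhds.add h0
    · exact Filter.Eventually.of_forall fun n => lt_add_of_pos_right y (hpos n)
  have h2 : Tendsto (fun n : ℕ => g (y + 1 / ((n:ℝ) + 1))) atTop (𝓝 (Function.rightLim g y)) :=
    (hg.tendsto_rightLim y).comp hseq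
  have hint : (⋂ n : ℕ, Ico y (y + 1 / ((n:ℝ) + 1))) = {y} := by
    apply Set.eq_singleton_iff_unique_mem.2
    constructor
    · simp only [mem_iInter, Set.mem_Ico]
      exact fun n => ⟨le_rfl, lt_add_of_pos_right y (hpos n)⟩
    · intro z hz
      simp only [mem_iInter, Set.mem_Ico] at hz
      by_contra hne
      have hz1 : y < z := lt_of_le_of_ne (hz 0).1 (Ne.symm hne)
      obtain ⟨n, hn⟩ := exists_nat_one_div_lt (sub_pos.2 hz1)
      have := (hz n).2
      have : (1:ℝ)/(n+1) < z - y := hn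
      linarith [(hz n).2]
  have hmono : Antitone (fun n : ℕ => Ico y (y + 1 / ((n:ℝ) + 1))) := by
    intro m n hmn
    apply Set.Ico_subset_Ico le_rfl
    have h1 : (1:ℝ) / ((n:ℝ) + 1) ≤ 1 / ((m:ℝ) + 1) := by
      apply one_div_le_one_div_of_le
      · positivity
      · have : (m:ℝ) ≤ (n:ℝ) := Nat.cast_le.2 hmn
        linarith
    linarith
  have h3 := tendsto_measure_iInter_atTop
    (μ := μ) (s := fun n : ℕ => Ico y (y + 1 / ((n:ℝ) + 1)))
    (fun n => measurableSet_Ico.nullMeasurableSet) hmono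
    ⟨0, by rw [hμ _ _ (le_of_lt (lt_add_of_pos_right y (hpos 0)))]; exact ENNReal.ofReal_ne_top⟩
  rw [hint] at h3
  have h4 : Tendsto (fun n : ℕ => μ (Ico y (y + 1 / ((n:ℝ) + 1)))) atTop
      (𝓝 (ENNReal.ofReal (Function.rightLim g y - g y))) := by
    have heq : (fun n : ℕ => μ (Ico y (y + 1 / ((n:ℝ) + 1)))) =
        fun n : ℕ => ENNReal.ofReal (g (y + 1 / ((n:ℝ) + 1)) - g y) :=
      funext fun n => hμ _ _ (le_of_lt (lt_add_of_pos_right y (hpos n)))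
    rw [heq]
    exact (ENNReal.continuous_ofReal.tendsto _).comp (h2.sub_const (g y))
  exact tendsto_nhds_unique h3 h4

private theorem myJumpCountable {g : ℝ → ℝ} (hg : Monotone g)
    (hlc : ∀ x : ℝ, ContinuousWithinAt g (Set.Iio x) x) :
    Set.Countable {y : ℝ | 0 < jumpOf g y} := by
  apply (hg.countable_not_continuousAt).mono
  intro y hy
  simp only [mem_setOf_eq] at hy ⊢
  intro hcont
  have h1 : Function.leftLim g y = g y := (hg.continuousWithinAt_Iio_iff_leftLim_eq).1 (hlc y)
  have h2 : Function.leftLim g y = Function.rightLim g y :=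
    hg.continuousAt_iff_leftLim_eq_rightLim.1 hcont
  have : jumpOf g y = 0 := by rw [jumpOf, ← h2, h1, sub_self]
  rw [this] at hy
  exact lt_irrefl 0 hy

private theorem myFinsumJumpLe {g : ℝ → ℝ} {μ : MeasureTheory.Measure ℝ} (hg : Monotone g)
    (hμ : ∀ a b : ℝ, a ≤ b → μ (Set.Ico a b) = ENNReal.ofReal (g b - g a))
    {a b : ℝ} (hab : a ≤ b) (s : Finset ℝ) (hs : ↑s ⊆ Set.Ico a b) :
    ∑ y ∈ s, jumpOf g y ≤ g b - g a := by
  have h1 : ∀ y ∈ s, (μ {y}) ≠ ⊤ := fun y _ => by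
    rw [myMeasSingleton hg hμ]; exact ENNReal.ofReal_ne_top
  have h2 : ∑ y ∈ s, jumpOf g y = (∑ y ∈ s, μ {y}).toReal := by
    rw [ENNReal.toReal_sum h1]
    apply Finset.sum_congr rfl
    intro y _
    rw [myMeasSingleton hg hμ, ENNReal.toReal_ofReal (myJumpNonneg hg y)]
  have hdisj : (↑s : Set ℝ).PairwiseDisjoint (fun y : ℝ => ({y} : Set ℝ)) := by
    intro i _ j _ hij
    simp [Function.onFun, Set.disjoint_singleton_left, hij]
  have h3 : μ (⋃ y ∈ s, ({y} : Set ℝ)) = ∑ y ∈ s, μ {y} :=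
    measure_biUnion_finset hdisj fun y _ => measurableSet_singleton y
  have hsub : (⋃ y ∈ s, ({y} : Set ℝ)) ⊆ Set.Ico a b := by
    intro y hy
    simp only [Set.mem_iUnion, Set.mem_singleton_iff] at hy
    obtain ⟨z, hz, rfl⟩ := hy
    exact hs hz
  have h4 : (∑ y ∈ s, μ {y}) ≤ μ (Set.Ico a b) := h3 ▸ measure_mono hsub
  rw [h2]
  calc (∑ y ∈ s, μ {y}).toReal ≤ (μ (Set.Ico a b)).toReal :=
        ENNReal.toReal_mono (by rw [hμ a b hab]; exact ENNReal.ofReal_ne_top) h4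
    _ = g b - g a := by
        rw [hμ a b hab, ENNReal.toReal_ofReal (sub_nonneg.2 (hg hab))]

private theorem myJumpSummable {g : ℝ → ℝ} {μ : MeasureTheory.Measure ℝ} (hg : Monotone g)
    (hμ : ∀ a b : ℝ, a ≤ b → μ (Set.Ico a b) = ENNReal.ofReal (g b - g a))
    {a b : ℝ} (hab : a ≤ b) {ι : Type*} (v : ι → ℝ) (hv : Function.Injective v)
    (hmem : ∀ i, v i ∈ Set.Ico a b) : Summable (fun i => jumpOf g (v i)) := by
  apply summable_of_sum_le (c := g b - g a)
  · intro i
    exact myJumpNonneg hg (v i)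
  · intro u
    classical
    have himg : ∑ i ∈ u, jumpOf g (v i) = ∑ y ∈ u.image v, jumpOf g y :=
      (Finset.sum_image (fun i _ j _ h => hv h)).symm
    rw [himg]
    apply myFinsumJumpLe hg hμ hab
    intro y hy
    simp only [Finset.coe_image, Set.mem_image] at hy
    obtain ⟨i, _, rfl⟩ := hy
    exact hmem i

private theorem myIntegralAtomic {g : ℝ → ℝ} {μ : MeasureTheory.Measure ℝ} (hg : Monotone g)
    (hlc : ∀ x : ℝ, ContinuousWithinAt g (Set.Iio x) x)
    (hμ : ∀ a b : ℝ, a ≤ b → μ (Set.Ico a b) = ENNReal.ofReal (g b - g a))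
    (hpure : ∀ a b : ℝ, a ≤ b → g b - g a = ∑' t : (Set.Ico a b), jumpOf g (t : ℝ))
    {a b : ℝ} (hab : a ≤ b) (f : ℝ → ℝ) (hf : IntegrableOn f (Set.Ico a b) μ) :
    ∫ s in Set.Ico a b, f s ∂μ
      = ∑' y : {y : ℝ | 0 < jumpOf g y ∧ y ∈ Set.Ico a b}, jumpOf g (y : ℝ) * f (y : ℝ) := by
  set S : Set ℝ := {y : ℝ | 0 < jumpOf g y ∧ y ∈ Set.Ico a b} with hSdef
  have hSsub : S ⊆ Set.Ico a b := fun y hy => hy.2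
  have hScount : S.Countable := (myJumpCountable hg hlc).mono (fun y hy => hy.1)
  have hsumS : Summable (fun y : S => jumpOf g (y : ℝ)) :=
    myJumpSummable hg hμ hab _ Subtype.val_injective (fun i => i.2.2)
  have hind : Set.indicator (Set.Ico a b) (jumpOf g) = Set.indicator S (jumpOf g) := by
    funext y
    by_cases h1 : y ∈ S
    · rw [Set.indicator_of_mem h1, Set.indicator_of_mem (hSsub h1)]
    · by_cases h2 : y ∈ Set.Ico a b
      · rw [Set.indicator_of_mem h2, Set.indicator_of_notMem h1]
        have hn : ¬ 0 < jumpOf g y := fun hpos => h1 ⟨hpos, h2⟩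
        have := myJumpNonneg hg y
        linarith
      · rw [Set.indicator_of_notMem h1, Set.indicator_of_notMem h2]
  have hSjump : g b - g a = ∑' y : S, jumpOf g (y : ℝ) := by
    rw [hpure a b hab, _root_.tsum_subtype, _root_.tsum_subtype, hind]
  have hμS : μ S = ENNReal.ofReal (g b - g a) := by
    haveI := hScount.to_subtype
    have h1 : μ S = ∑' y : S, μ {(y : ℝ)} := by
      have hdisj : Pairwise (Function.onFun Disjoint fun y : S => ({(y : ℝ)} : Set ℝ)) := by
        intro i j hij
        simp only [Function.onFun, Set.disjoint_singleton_left, Set.mem_singleton_iff]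
        exact fun h => hij (Subtype.ext h)
      have h2 := measure_iUnion (μ := μ) hdisj (fun y : S => measurableSet_singleton (y : ℝ))
      rw [← h2]
      congr 1
      exact (Set.iUnion_of_singleton_coe S).symm
    rw [h1, hSjump, ENNReal.ofReal_tsum_of_nonneg (fun y => myJumpNonneg hg _) hsumS]
    exact tsum_congr fun y => myMeasSingleton hg hμ (y : ℝ)
  have hnull : μ (Set.Ico a b \ S) = 0 := by
    have h1 : μ (Set.Ico a b \ S) = μ (Set.Ico a b) - μ S :=
      measure_diff hSsub hScount.measurableSet.nullMeasurableSet
        (by rw [hμS]; exact ENNReal.ofReal_ne_top)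
    rw [h1, hμ a b hab, hμS, tsub_self]
  have hae : (Set.Ico a b : Set ℝ) =ᵐ[μ] S := by
    apply MeasureTheory.ae_eq_set.2
    refine ⟨hnull, ?_⟩
    rw [Set.diff_eq_empty.2 hSsub]
    exact measure_empty
  rw [setIntegral_congr_set hae, setIntegral_countable f hScount (hf.mono_set hSsub)]
  apply tsum_congr
  intro y
  rw [measureReal_def, myMeasSingleton hg hμ, ENNReal.toReal_ofReal (myJumpNonneg hg _), smul_eq_mul]

private theorem gMon_succ_eq (μ : MeasureTheory.Measure ℝ) (c : ℝ) (n : ℕ) {s : ℝ} (h : c ≤ s) :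
    gMon μ c (n + 1) s = ((n : ℝ) + 1) * ∫ t in Set.Ico c s, gMon μ c n t ∂μ := by
  show ((n : ℝ) + 1) * ointeg μ (gMon μ c n) c s = _
  rw [ointeg, if_pos h]

private theorem myGMonReg {g : ℝ → ℝ} {μ : MeasureTheory.Measure ℝ} (hg : Monotone g)
    (hμ : ∀ a b : ℝ, a ≤ b → μ (Set.Ico a b) = ENNReal.ofReal (g b - g a)) (x₀ : ℝ) (n : ℕ) :
    (∀ s, x₀ ≤ s → 0 ≤ gMon μ x₀ n s) ∧
    (∀ s s', x₀ ≤ s → s ≤ s' → gMon μ x₀ n s ≤ gMon μ x₀ n s') ∧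
    (∀ b, x₀ ≤ b → IntegrableOn (gMon μ x₀ n) (Set.Ico x₀ b) μ) := by
  have hfin : ∀ a b : ℝ, a ≤ b → μ (Set.Ico a b) ≠ ⊤ := fun a b hab => by
    rw [hμ a b hab]; exact ENNReal.ofReal_ne_top
  induction n with
  | zero =>
    refine ⟨fun s _ => zero_le_one, fun _ _ _ _ => le_rfl, fun b hb => ?_⟩
    show IntegrableOn (fun _ => (1:ℝ)) _ μ
    exact integrableOn_const (hfin x₀ b hb)
  | succ n ih =>
    obtain ⟨h0, hmono, hint⟩ := ih
    have h0' : ∀ s, x₀ ≤ s → 0 ≤ gMon μ x₀ (n+1) s := by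
      intro s hs
      rw [gMon_succ_eq μ x₀ n hs]
      apply mul_nonneg (by positivity)
      apply setIntegral_nonneg measurableSet_Ico
      intro y hy
      exact h0 y hy.1
    have hmono' : ∀ s s', x₀ ≤ s → s ≤ s' → gMon μ x₀ (n+1) s ≤ gMon μ x₀ (n+1) s' := by
      intro s s' hs hss
      rw [gMon_succ_eq μ x₀ n hs, gMon_succ_eq μ x₀ n (hs.trans hss)]
      apply mul_le_mul_of_nonneg_left _ (by positivity)
      apply setIntegral_mono_set (hint s' (hs.trans hss))
      · apply (ae_restrict_iff' measurableSet_Ico).2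
        exact Filter.Eventually.of_forall fun y hy => h0 y hy.1
      · exact HasSubset.Subset.eventuallyLE (Set.Ico_subset_Ico le_rfl hss)
    refine ⟨h0', hmono', ?_⟩
    intro b hb
    set f' : ℝ → ℝ := fun s => gMon μ x₀ (n+1) (max x₀ s) with hf'def
    have hf'mono : Monotone f' := by
      intro s t hst
      exact hmono' _ _ (le_max_left _ _) (max_le_max le_rfl hst)
    have hf'meas : Measurable f' := hf'mono.measurable
    have hbound : ∀ᵐ a ∂(μ.restrict (Set.Ico x₀ b)), ‖f' a‖ ≤ gMon μ x₀ (n+1) b := by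
      apply (ae_restrict_iff' measurableSet_Ico).2
      apply Filter.Eventually.of_forall
      intro a ha
      have h1 : max x₀ a = a := max_eq_right ha.1
      rw [Real.norm_eq_abs, hf'def]
      simp only [h1]
      rw [abs_of_nonneg (h0' a ha.1)]
      exact hmono' a b ha.1 (le_of_lt ha.2)
    have hi' : IntegrableOn f' (Set.Ico x₀ b) μ :=
      Measure.integrableOn_of_bounded (hfin x₀ b hb) hf'meas.aestronglyMeasurable hbound
    apply hi'.congr_fun _ measurableSet_Ico
    intro a ha
    show f' a = gMon μ x₀ (n+1) a
    rw [hf'def]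
    simp only [max_eq_right ha.1]

private noncomputable def maxEquiv {ι : Type*} [LinearOrder ι] (ρ : ι → ℝ) (hρ : StrictMono ρ)
    (n : ℕ) (s : ℝ) :
    ((y : {y : ι // ρ y < s}) × {t : Finset ι // t.card = n ∧ ∀ z ∈ t, ρ z < ρ (y : ι)}) ≃
      {t : Finset ι // t.card = n + 1 ∧ ∀ z ∈ t, ρ z < s} where
  toFun p := ⟨insert (p.1 : ι) (p.2 : Finset ι), by
    have hnot : (p.1 : ι) ∉ (p.2 : Finset ι) := fun h => lt_irrefl _ (p.2.2.2 _ h)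
    refine ⟨by rw [Finset.card_insert_of_notMem hnot, p.2.2.1], ?_⟩
    intro z hz
    rcases Finset.mem_insert.1 hz with h | h
    · rw [h]; exact p.1.2
    · exact (p.2.2.2 z h).trans p.1.2⟩
  invFun t :=
    have hne : (t : Finset ι).Nonempty := Finset.card_pos.1 (by rw [t.2.1]; omega)
    ⟨⟨(t : Finset ι).max' hne, t.2.2 _ ((t : Finset ι).max'_mem hne)⟩,
      ⟨(t : Finset ι).erase ((t : Finset ι).max' hne), by
        rw [Finset.card_erase_of_mem ((t : Finset ι).max'_mem hne), t.2.1]; omega,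
        fun z hz => hρ (lt_of_le_of_ne
          (Finset.le_max' _ z (Finset.mem_of_mem_erase hz)) (Finset.ne_of_mem_erase hz))⟩⟩
  left_inv := by
    rintro ⟨⟨y, hy⟩, ⟨t, ht1, ht2⟩⟩
    have hnot : y ∉ t := fun h => lt_irrefl _ (ht2 _ h)
    have hmem : y ∈ insert y t := Finset.mem_insert_self _ _
    have hmax : ∀ hne : (insert y t).Nonempty, (insert y t).max' hne = y := by
      intro hne
      apply le_antisymm
      · apply Finset.max'_le
        intro z hz
        rcases Finset.mem_insert.1 hz with h | h
        · exact le_of_eq h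
        · exact le_of_lt (hρ.lt_iff_lt.1 (ht2 z h))
      · exact Finset.le_max' _ _ hmem
    apply Sigma.ext
    · apply Subtype.ext
      exact hmax ⟨y, hmem⟩
    · rw [Subtype.heq_iff_coe_eq]
      · show (insert y t).erase ((insert y t).max' _) = t
        rw [hmax _, Finset.erase_insert hnot]
      · intro u
        dsimp only
        rw [hmax _]
  right_inv := by
    rintro ⟨t, ht1, ht2⟩
    apply Subtype.ext
    dsimp only
    exact Finset.insert_erase (t.max'_mem _)

private theorem myGMonEq {g : ℝ → ℝ} {μ : MeasureTheory.Measure ℝ} (hg : Monotone g)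
    (hlc : ∀ x : ℝ, ContinuousWithinAt g (Set.Iio x) x)
    (hμ : ∀ a b : ℝ, a ≤ b → μ (Set.Ico a b) = ENNReal.ofReal (g b - g a))
    (hpure : ∀ a b : ℝ, a ≤ b → g b - g a = ∑' t : (Set.Ico a b), jumpOf g (t : ℝ))
    (x₀ x : ℝ) (hx : x₀ ≤ x) (n : ℕ) :
    ∀ s : ℝ, x₀ ≤ s → s ≤ x →
      gMon μ x₀ n s = (n.factorial : ℝ) *
        ∑' t : {t : Finset {y : ℝ // 0 < jumpOf g y ∧ y ∈ Set.Ico x₀ x} //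
            t.card = n ∧ ∀ z ∈ t, ((z : ℝ) < s)},
          ∏ z ∈ (t : Finset {y : ℝ // 0 < jumpOf g y ∧ y ∈ Set.Ico x₀ x}), jumpOf g (z : ℝ) := by
  induction n with
  | zero =>
    intro s hs hsx
    have hQ : ∀ t : {t : Finset {y : ℝ // 0 < jumpOf g y ∧ y ∈ Set.Ico x₀ x} //
        t.card = 0 ∧ ∀ z ∈ t, ((z : ℝ) < s)},
        t = ⟨∅, by simp⟩ := by
      rintro ⟨t, ht0, _⟩
      exact Subtype.ext (Finset.card_eq_zero.1 ht0)
    show (1:ℝ) = _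
    rw [tsum_eq_single (⟨∅, by simp⟩) (fun b hb => absurd (hQ b) hb)]
    simp
  | succ n ih =>
    intro s hs hsx
    set I := {y : ℝ // 0 < jumpOf g y ∧ y ∈ Set.Ico x₀ x} with hIdef
    classical
    have hρ : StrictMono (fun y : I => (y : ℝ)) := fun a b h => h
    set ρ : I → ℝ := fun y : I => (y : ℝ) with hρdef
    have hIsum : Summable (fun y : I => jumpOf g (y : ℝ)) :=
      myJumpSummable hg hμ hx _ Subtype.val_injective (fun i => i.2.2)
    have hprodSum : Summable (fun t : Finset I => ∏ z ∈ t, jumpOf g (z : ℝ)) :=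
      mySummableProd (fun i => myJumpNonneg hg _) hIsum
    have hQsum : Summable (fun t : {t : Finset I // t.card = n + 1 ∧ ∀ z ∈ t, ρ z < s} =>
        ∏ z ∈ (t : Finset I), jumpOf g (z : ℝ)) :=
      hprodSum.comp_injective Subtype.val_injective
    set E := maxEquiv ρ hρ n s with hEdef
    have hcompeq : ((fun t : {t : Finset I // t.card = n + 1 ∧ ∀ z ∈ t, ρ z < s} =>
          ∏ z ∈ (t : Finset I), jumpOf g (z : ℝ)) ∘ E)
        = fun p : (y : {y : I // ρ y < s}) ×
            {t : Finset I // t.card = n ∧ ∀ z ∈ t, ρ z < ρ (y : I)} =>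
          jumpOf g ((p.1 : I) : ℝ) * ∏ z ∈ (p.2 : Finset I), jumpOf g (z : ℝ) := by
      funext p
      dsimp only [Function.comp]
      have hnot : ((p.1 : I)) ∉ (p.2 : Finset I) := fun h => lt_irrefl _ (p.2.2.2 _ h)
      show ∏ z ∈ insert (p.1 : I) (p.2 : Finset I), jumpOf g (z : ℝ) = _
      rw [Finset.prod_insert hnot]
    have hsig : Summable (fun p : (y : {y : I // ρ y < s}) ×
          {t : Finset I // t.card = n ∧ ∀ z ∈ t, ρ z < ρ (y : I)} =>
        jumpOf g ((p.1 : I) : ℝ) * ∏ z ∈ (p.2 : Finset I), jumpOf g (z : ℝ)) := by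
      rw [← hcompeq]
      exact hQsum.comp_injective E.injective
    -- the equivalence between the set-subtype and the double subtype
    set S : Set ℝ := {y : ℝ | 0 < jumpOf g y ∧ y ∈ Set.Ico x₀ s} with hSdef
    let e1 : {y : I // ρ y < s} ≃ S :=
      { toFun := fun y => ⟨((y : I) : ℝ), (y : I).2.1, (y : I).2.2.1, y.2⟩
        invFun := fun y => ⟨⟨(y : ℝ), y.2.1, y.2.2.1, lt_of_lt_of_le y.2.2.2 hsx⟩, y.2.2.2⟩
        left_inv := fun y => by rfl
        right_inv := fun y => by rfl }
    have key := myIntegralAtomic hg hlc hμ hpure hs (gMon μ x₀ n)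
      ((myGMonReg hg hμ x₀ n).2.2 s hs)
    have step1 : (∑' y : S, jumpOf g (y : ℝ) * gMon μ x₀ n (y : ℝ))
        = ∑' y : {y : I // ρ y < s}, jumpOf g ((y : I) : ℝ) * gMon μ x₀ n ((y : I) : ℝ) :=
      (Equiv.tsum_eq e1 (fun y : S => jumpOf g (y : ℝ) * gMon μ x₀ n (y : ℝ))).symm
    have step2 : ∀ y : {y : I // ρ y < s},
        jumpOf g ((y : I) : ℝ) * gMon μ x₀ n ((y : I) : ℝ)
          = (n.factorial : ℝ) * ∑' t : {t : Finset I // t.card = n ∧ ∀ z ∈ t, ρ z < ρ (y : I)},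
              jumpOf g ((y : I) : ℝ) * ∏ z ∈ (t : Finset I), jumpOf g (z : ℝ) := by
      intro y
      rw [ih ((y : I) : ℝ) (y : I).2.2.1 (le_of_lt (y : I).2.2.2), tsum_mul_left]
      ring
    have step5 : (∑' y : {y : I // ρ y < s},
          ∑' t : {t : Finset I // t.card = n ∧ ∀ z ∈ t, ρ z < ρ (y : I)},
            jumpOf g ((y : I) : ℝ) * ∏ z ∈ (t : Finset I), jumpOf g (z : ℝ))
        = ∑' p : (y : {y : I // ρ y < s}) ×
            {t : Finset I // t.card = n ∧ ∀ z ∈ t, ρ z < ρ (y : I)},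
          jumpOf g ((p.1 : I) : ℝ) * ∏ z ∈ (p.2 : Finset I), jumpOf g (z : ℝ) :=
      (Summable.tsum_sigma hsig).symm
    have step6 : (∑' p : (y : {y : I // ρ y < s}) ×
            {t : Finset I // t.card = n ∧ ∀ z ∈ t, ρ z < ρ (y : I)},
          jumpOf g ((p.1 : I) : ℝ) * ∏ z ∈ (p.2 : Finset I), jumpOf g (z : ℝ))
        = ∑' t : {t : Finset I // t.card = n + 1 ∧ ∀ z ∈ t, ρ z < s},
            ∏ z ∈ (t : Finset I), jumpOf g (z : ℝ) := by
      rw [← Equiv.tsum_eq E (fun t : {t : Finset I // t.card = n + 1 ∧ ∀ z ∈ t, ρ z < s} =>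
        ∏ z ∈ (t : Finset I), jumpOf g (z : ℝ))]
      exact tsum_congr fun p => (congrFun hcompeq p).symm
    rw [gMon_succ_eq μ x₀ n hs, key, step1, tsum_congr step2, tsum_mul_left, step5, step6]
    push_cast [Nat.factorial_succ]
    ring

end auxiliary

/-- For a purely atomic derivator (`g^C = 0`, i.e. the increment of `g` on any `[a,b)` is the
sum of its jumps there), the exponential series `Σ λⁿ gₙ(x)/n!` equals, for `x ≥ x₀`, the
unconditionally convergent product `Π_{y ∈ D_g ∩ [x₀,x)} (1 + λ Δg(y))`. -/
theorem stmt17 {𝕜 : Type*} [RCLike 𝕜] (g : ℝ → ℝ) (μ : MeasureTheory.Measure ℝ)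
    (hg : Monotone g) (hlc : ∀ x : ℝ, ContinuousWithinAt g (Set.Iio x) x)
    (hμ : ∀ a b : ℝ, a ≤ b → μ (Set.Ico a b) = ENNReal.ofReal (g b - g a))
    (hpure : ∀ a b : ℝ, a ≤ b → g b - g a = ∑' t : (Set.Ico a b), jumpOf g (t : ℝ))
    (x₀ : ℝ) (l : 𝕜) :
    ∀ x : ℝ, x₀ ≤ x →
      HasProd (fun y : {y : ℝ // 0 < jumpOf g y ∧ y ∈ Set.Ico x₀ x} =>
          1 + l * ((jumpOf g (y : ℝ) : ℝ) : 𝕜))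
        (∑' n : ℕ, l ^ n * ((gMon μ x₀ n x : ℝ) : 𝕜) / ((Nat.factorial n : ℝ) : 𝕜)) := by
  intro x hx
  classical
  set I := {y : ℝ // 0 < jumpOf g y ∧ y ∈ Set.Ico x₀ x} with hIdef
  set f : I → 𝕜 := fun y => l * ((jumpOf g (y : ℝ) : ℝ) : 𝕜) with hfdef
  have hIsum : Summable (fun y : I => jumpOf g (y : ℝ)) :=
    myJumpSummable hg hμ hx _ Subtype.val_injective (fun i => i.2.2)
  have hnorm : Summable (fun t : Finset I => ∏ z ∈ t, ‖f z‖) := by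
    have h1 : Summable (fun y : I => ‖l‖ * jumpOf g (y : ℝ)) := hIsum.mul_left _
    have h2 := mySummableProd (c := fun y : I => ‖l‖ * jumpOf g (y : ℝ))
      (fun i => mul_nonneg (norm_nonneg l) (myJumpNonneg hg _)) h1
    apply h2.congr
    intro t
    apply Finset.prod_congr rfl
    intro z _
    rw [hfdef]
    rw [norm_mul, RCLike.norm_ofReal, abs_of_nonneg (myJumpNonneg hg _)]
  have hP := myHasProdOneAdd f hnorm
  set F : Finset I → 𝕜 := fun t => ∏ z ∈ t, f z with hFdef
  have hsum𝕜 : Summable F := by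
    apply Summable.of_norm
    apply hnorm.congr
    intro t
    rw [hFdef, norm_prod]
  -- the grouping equivalence
  let eAll : (Σ n : ℕ, {t : Finset I // t.card = n ∧ ∀ z ∈ t, ((z : ℝ) < x)}) ≃ Finset I :=
    { toFun := fun p => p.2.1
      invFun := fun t => ⟨t.card, t, rfl, fun z _ => z.2.2.2⟩
      left_inv := by
        rintro ⟨n, t, ht1, ht2⟩
        apply Sigma.ext
        · exact ht1
        · rw [Subtype.heq_iff_coe_eq]
          · intro u
            dsimp only
            rw [ht1]
      right_inv := fun t => rfl }
  have hsig : Summable (fun p : Σ n : ℕ, {t : Finset I // t.card = n ∧ ∀ z ∈ t, ((z : ℝ) < x)} =>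
      F p.2.1) := hsum𝕜.comp_injective eAll.injective
  have hval : (∑' t : Finset I, F t) = ∑' n : ℕ, l ^ n * ((gMon μ x₀ n x : ℝ) : 𝕜)
      / ((Nat.factorial n : ℝ) : 𝕜) := by
    have hA : (∑' t : Finset I, F t)
        = ∑' p : Σ n : ℕ, {t : Finset I // t.card = n ∧ ∀ z ∈ t, ((z : ℝ) < x)}, F p.2.1 :=
      (Equiv.tsum_eq eAll F).symm
    have hB : (∑' p : Σ n : ℕ, {t : Finset I // t.card = n ∧ ∀ z ∈ t, ((z : ℝ) < x)}, F p.2.1)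
        = ∑' n : ℕ, ∑' t : {t : Finset I // t.card = n ∧ ∀ z ∈ t, ((z : ℝ) < x)}, F t.1 :=
      Summable.tsum_sigma hsig
    rw [hA, hB]
    apply tsum_congr
    intro n
    have hterm : ∀ t : {t : Finset I // t.card = n ∧ ∀ z ∈ t, ((z : ℝ) < x)},
        F t.1 = l ^ n * (((∏ z ∈ t.1, jumpOf g (z : ℝ) : ℝ)) : 𝕜) := by
      intro t
      rw [hFdef, hfdef]
      show ∏ z ∈ t.1, (l * ((jumpOf g (z : ℝ) : ℝ) : 𝕜)) = _
      rw [Finset.prod_mul_distrib, Finset.prod_const, t.2.1]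
      congr 1
      push_cast
      rfl
    calc (∑' t : {t : Finset I // t.card = n ∧ ∀ z ∈ t, ((z : ℝ) < x)}, F t.1)
        = ∑' t : {t : Finset I // t.card = n ∧ ∀ z ∈ t, ((z : ℝ) < x)},
            l ^ n * (((∏ z ∈ t.1, jumpOf g (z : ℝ) : ℝ)) : 𝕜) := tsum_congr hterm
      _ = l ^ n * ((∑' t : {t : Finset I // t.card = n ∧ ∀ z ∈ t, ((z : ℝ) < x)},
            (∏ z ∈ t.1, jumpOf g (z : ℝ)) : ℝ) : 𝕜) := by
          rw [tsum_mul_left, RCLike.ofReal_tsum]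
      _ = l ^ n * ((gMon μ x₀ n x : ℝ) : 𝕜) / ((Nat.factorial n : ℝ) : 𝕜) := by
          have hfac : (Nat.factorial n : ℝ) ≠ 0 := Nat.cast_ne_zero.2 (Nat.factorial_ne_zero n)
          have h1 := myGMonEq hg hlc hμ hpure x₀ x hx n x hx le_rfl
          have h2 : (∑' t : {t : Finset I // t.card = n ∧ ∀ z ∈ t, ((z : ℝ) < x)},
              (∏ z ∈ t.1, jumpOf g (z : ℝ)) : ℝ) = gMon μ x₀ n x / (Nat.factorial n : ℝ) := by
            rw [h1]
            field_simp
            rfl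
          rw [h2, RCLike.ofReal_div, mul_div_assoc]
  rw [← hval]
  exact hP
end
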